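/- arXiv:math/0609766 — 2 statements merged into one kernel-verified Lean document; each statement's English description precedes it below -/
import Mathlib

section
/- Let (y_n) be a sequence in ℤ^d with y_n/n → y ∈ ℝ^d \ {0}. Then for every λ > 0 and all real numbers γ, δ with γ < ∂⁺_λ β_λ(y) ≤ ∂⁻_λ β_λ(y) < δ (where ∂⁺ and ∂⁻ denote the right and left derivatives of λ ↦ β_λ(y)), one has lim_{n→∞} P^{y_n}_λ[H(y_n)/n ∈ [γ, δ]] = 1, where P^y_λ is the probability measure with density exp(−λH(y) − Φ(H(y))) 1_{{H(y)<∞}} / b_λ(y)-normalization with respect to P. -/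
open MeasureTheory ProbabilityTheory Filter Topology Set Pointwise

noncomputable section

namespace RWRP

/-- The `2d` unit steps in `ℤ^d`. -/
def unitSteps (d : ℕ) : Finset (Fin d → ℤ) :=
  (Finset.univ : Finset (Fin d × Bool)).image
    (fun p => fun j => if j = p.1 then (if p.2 then 1 else -1) else 0)

/-- The uniform distribution on the `2d` unit steps of `ℤ^d`. -/
def stepDist (d : ℕ) : Measure (Fin d → ℤ) :=
  ((unitSteps d).card : ENNReal)⁻¹ • ∑ s ∈ unitSteps d, Measure.dirac s

/-- `S` is the symmetric nearest-neighbor random walk on `ℤ^d` under `P`, started at the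
origin: `S 0 = 0` and the increments are i.i.d., uniformly distributed on the unit steps. -/
def IsSRW {d : ℕ} {Ω : Type*} [MeasurableSpace Ω] (P : Measure Ω)
    (S : ℕ → Ω → Fin d → ℤ) : Prop :=
  (∀ ω, S 0 ω = 0) ∧ (∀ n, Measurable (S n)) ∧
    (∀ n, Measure.map (fun ω => S (n + 1) ω - S n ω) P = stepDist d) ∧
    iIndepFun (fun n ω => S (n + 1) ω - S n ω) P

/-- The `ℓ¹`-norm of a point of `ℤ^d`. -/
def norm1Z {d : ℕ} (x : Fin d → ℤ) : ℝ := ∑ i, |(x i : ℝ)|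

/-- The `ℓ¹`-norm on `ℝ^d`. -/
def norm1R {d : ℕ} (x : Fin d → ℝ) : ℝ := ∑ i, |x i|

/-- The embedding `ℤ^d → ℝ^d`. -/
def zToR {d : ℕ} (x : Fin d → ℤ) : Fin d → ℝ := fun i => (x i : ℝ)

/-- Euclidean scalar product on `ℝ^d`. -/
def dotR {d : ℕ} (h x : Fin d → ℝ) : ℝ := ∑ i, h i * x i

/-- `f` is a norm on `ℝ^d`. -/
def IsNorm {d : ℕ} (f : (Fin d → ℝ) → ℝ) : Prop :=
  (∀ x, 0 ≤ f x) ∧ (∀ x, f x = 0 ↔ x = 0) ∧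
    (∀ (c : ℝ) (x), f (c • x) = |c| * f x) ∧ ∀ x y, f (x + y) ≤ f x + f y

/-- The dual norm `f*(ℓ) = sup_{x ≠ 0} (ℓ·x)/f(x)`. -/
def dualNorm {d : ℕ} (f : (Fin d → ℝ) → ℝ) (ℓ : Fin d → ℝ) : ℝ :=
  ⨆ x : {x : Fin d → ℝ // x ≠ 0}, dotR ℓ x.1 / f x.1

/-- Number of visits of the walk to `x` during `1 ≤ m ≤ n`. -/
def localTime {d : ℕ} {Ω : Type*} (S : ℕ → Ω → Fin d → ℤ) (x : Fin d → ℤ) (n : ℕ)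
    (ω : Ω) : ℕ :=
  ((Finset.Icc 1 n).filter (fun m => S m ω = x)).card

/-- Time of the first visit of the walk to the site `x`. -/
def hitTime {d : ℕ} {Ω : Type*} (S : ℕ → Ω → Fin d → ℤ) (x : Fin d → ℤ) (ω : Ω) : ℕ :=
  sInf {n : ℕ | S n ω = x}

/-- The event that the walk ever visits the site `x`, i.e. `H(x) < ∞`. -/
def hits {d : ℕ} {Ω : Type*} (S : ℕ → Ω → Fin d → ℤ) (x : Fin d → ℤ) : Set Ω :=
  {ω | ∃ n, S n ω = x}

/-- Entrance time of the walk into the half-space `{x : ℓ·x ≥ u}`. -/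
def hitHalf {d : ℕ} {Ω : Type*} (S : ℕ → Ω → Fin d → ℤ) (ℓ : Fin d → ℝ) (u : ℝ)
    (ω : Ω) : ℕ :=
  sInf {n : ℕ | u ≤ dotR ℓ (zToR (S n ω))}

/-- The annealed path potential `Φ(n) = Σ_{x ∈ ℤ^d} φ(l_x(n))`. -/
def annPotential {d : ℕ} {Ω : Type*} (φ : ℝ → ℝ) (S : ℕ → Ω → Fin d → ℤ) (n : ℕ)
    (ω : Ω) : ℝ :=
  ∑' x : Fin d → ℤ, φ (localTime S x n ω)

/-- Assumptions (An) on the annealed potential shape function `φ`. -/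
def IsGoodPhi (φ : ℝ → ℝ) : Prop :=
  φ 0 = 0 ∧ (∀ t, 0 ≤ t → 0 ≤ φ t) ∧ MonotoneOn φ (Ici 0) ∧ ConcaveOn ℝ (Ici 0) φ ∧
    (∃ t, 0 ≤ t ∧ φ t ≠ 0) ∧ Tendsto (fun t => φ t / t) atTop (𝓝 0)

/-- The annealed two-point function `b_λ(x)`. -/
def twoPointB {d : ℕ} {Ω : Type*} [MeasurableSpace Ω] (P : Measure Ω) (φ : ℝ → ℝ)
    (S : ℕ → Ω → Fin d → ℤ) (lam : ℝ) (x : Fin d → ℤ) : ℝ :=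
  -Real.log (∫ ω, Set.indicator (hits S x)
    (fun ω' => Real.exp (-(lam * (hitTime S x ω' : ℝ))
      - annPotential φ S (hitTime S x ω') ω')) ω ∂P)

/-- The quenched path potential `Ψ(n,ω) = Σ_{1 ≤ m ≤ n} V_{S(m)}(ω)`. -/
def quPotential {d : ℕ} {Ω Ωe : Type*} (V : (Fin d → ℤ) → Ωe → ℝ)
    (S : ℕ → Ω → Fin d → ℤ) (n : ℕ) (ωe : Ωe) (ω : Ω) : ℝ :=
  ∑ m ∈ Finset.Icc 1 n, V (S m ω) ωe

/-- The quenched two-point function `a_λ(x,ω)`. -/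
def twoPointA {d : ℕ} {Ω Ωe : Type*} [MeasurableSpace Ω] (P : Measure Ω)
    (V : (Fin d → ℤ) → Ωe → ℝ) (S : ℕ → Ω → Fin d → ℤ) (lam : ℝ) (x : Fin d → ℤ)
    (ωe : Ωe) : ℝ :=
  -Real.log (∫ ω, Set.indicator (hits S x)
    (fun ω' => Real.exp (-(lam * (hitTime S x ω' : ℝ))
      - quPotential V S (hitTime S x ω') ωe ω')) ω ∂P)

/-- Assumptions (Qu) on the random potential `𝕍 = (V_x)`: i.i.d., nonnegative, nontrivial,
in `L^d`, with essential infimum `0`. -/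
def IsIIDPotential {d : ℕ} {Ωe : Type*} [MeasurableSpace Ωe] (μ : Measure Ωe)
    (V : (Fin d → ℤ) → Ωe → ℝ) : Prop :=
  (∀ x, Measurable (V x)) ∧
    (∀ x, ∀ᵐ ωe ∂μ, 0 ≤ V x ωe) ∧
    iIndepFun V μ ∧
    (∀ x, Measure.map (V x) μ = Measure.map (V 0) μ) ∧
    (¬∃ c : ℝ, V 0 =ᵐ[μ] fun _ => c) ∧
    MemLp (V 0) d μ ∧
    essInf (V 0) μ = 0

/-- The quenched shape theorem property for the family `α` of Lyapunov norms:
`a_λ(x_k, ·)/α_λ(x_k) → 1` almost surely along any `‖x_k‖₁ → ∞`. -/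
def QuShape {d : ℕ} {Ω Ωe : Type*} [MeasurableSpace Ω] [MeasurableSpace Ωe]
    (P : Measure Ω) (μ : Measure Ωe) (V : (Fin d → ℤ) → Ωe → ℝ)
    (S : ℕ → Ω → Fin d → ℤ) (α : ℝ → (Fin d → ℝ) → ℝ) : Prop :=
  ∀ lam : ℝ, 0 ≤ lam → ∃ F : Set Ωe, μ Fᶜ = 0 ∧
    ∀ ωe ∈ F, ∀ xs : ℕ → Fin d → ℤ, Tendsto (fun k => norm1Z (xs k)) atTop atTop →
      Tendsto (fun k => twoPointA P V S lam (xs k) ωe / α lam (zToR (xs k))) atTop (𝓝 1)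

/-- The annealed shape theorem property for the family `β` of Lyapunov norms:
`b_λ(x_k)/β_λ(x_k) → 1` along any `‖x_k‖₁ → ∞`. -/
def AnShape {d : ℕ} {Ω : Type*} [MeasurableSpace Ω] (P : Measure Ω) (φ : ℝ → ℝ)
    (S : ℕ → Ω → Fin d → ℤ) (β : ℝ → (Fin d → ℝ) → ℝ) : Prop :=
  ∀ lam : ℝ, 0 ≤ lam → ∀ xs : ℕ → Fin d → ℤ,
    Tendsto (fun k => norm1Z (xs k)) atTop atTop →
      Tendsto (fun k => twoPointB P φ S lam (xs k) / β lam (zToR (xs k))) atTop (𝓝 1)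

/-- The rate function `x ↦ sup_{λ ≥ 0} (β_λ(x) − λ)`, with values in `EReal`. -/
def rateFn {d : ℕ} (β : ℝ → (Fin d → ℝ) → ℝ) (x : Fin d → ℝ) : EReal :=
  ⨆ (lam : ℝ) (_ : 0 ≤ lam), ((β lam x - lam : ℝ) : EReal)

/-- The free energy `sup_{x ∈ ℝ^d} (h·x − I(x))`, with values in `EReal`. -/
def freeEnergySup {d : ℕ} (β : ℝ → (Fin d → ℝ) → ℝ) (h : Fin d → ℝ) : EReal :=
  ⨆ x : Fin d → ℝ, ((dotR h x : ℝ) : EReal) - rateFn β x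

/-- The tilted rate function `x ↦ I(x) − h·x + sup_y (h·y − I(y))`. -/
def tiltedRate {d : ℕ} (β : ℝ → (Fin d → ℝ) → ℝ) (h x : Fin d → ℝ) : EReal :=
  rateFn β x - ((dotR h x : ℝ) : EReal) + freeEnergySup β h

/-- The annealed partition function `Z_n^h`. -/
def Zan {d : ℕ} {Ω : Type*} [MeasurableSpace Ω] (P : Measure Ω) (φ : ℝ → ℝ)
    (S : ℕ → Ω → Fin d → ℤ) (h : Fin d → ℝ) (n : ℕ) : ℝ :=
  ∫ ω, Real.exp (dotR h (zToR (S n ω)) - annPotential φ S n ω) ∂P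

/-- The annealed path measure `Q_n^h`, as an `ℝ≥0∞`-valued set function. -/
def Qan {d : ℕ} {Ω : Type*} [MeasurableSpace Ω] (P : Measure Ω) (φ : ℝ → ℝ)
    (S : ℕ → Ω → Fin d → ℤ) (h : Fin d → ℝ) (n : ℕ) (B : Set Ω) : ENNReal :=
  (∫⁻ ω in B, ENNReal.ofReal (Real.exp (dotR h (zToR (S n ω)) - annPotential φ S n ω)) ∂P) /
    ∫⁻ ω, ENNReal.ofReal (Real.exp (dotR h (zToR (S n ω)) - annPotential φ S n ω)) ∂P

/-- The quenched partition function `Z_{n,ω}^h`. -/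
def Zqu {d : ℕ} {Ω Ωe : Type*} [MeasurableSpace Ω] (P : Measure Ω)
    (V : (Fin d → ℤ) → Ωe → ℝ) (S : ℕ → Ω → Fin d → ℤ) (h : Fin d → ℝ) (n : ℕ)
    (ωe : Ωe) : ℝ :=
  ∫ ω, Real.exp (dotR h (zToR (S n ω)) - quPotential V S n ωe ω) ∂P

/-- The quenched path measure `Q_{n,ω}^h`, as an `ℝ≥0∞`-valued set function. -/
def Qqu {d : ℕ} {Ω Ωe : Type*} [MeasurableSpace Ω] (P : Measure Ω)
    (V : (Fin d → ℤ) → Ωe → ℝ) (S : ℕ → Ω → Fin d → ℤ) (h : Fin d → ℝ) (n : ℕ)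
    (ωe : Ωe) (B : Set Ω) : ENNReal :=
  (∫⁻ ω in B, ENNReal.ofReal (Real.exp (dotR h (zToR (S n ω)) - quPotential V S n ωe ω)) ∂P) /
    ∫⁻ ω, ENNReal.ofReal (Real.exp (dotR h (zToR (S n ω)) - quPotential V S n ωe ω)) ∂P

/-- The weight `exp(−λH(y) − Φ(H(y)))` defining the path measure `P^y_λ`. -/
def hitWeight {d : ℕ} {Ω : Type*} (φ : ℝ → ℝ) (S : ℕ → Ω → Fin d → ℤ)
    (y : Fin d → ℤ) (lam : ℝ) : Ω → ℝ :=
  fun ω => Real.exp (-(lam * (hitTime S y ω : ℝ)) - annPotential φ S (hitTime S y ω) ω)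

/-- The probability measure `P^y_λ` with density
`exp(−λH(y) − Φ(H(y))) 1_{H(y)<∞}` (normalized) with respect to `P`,
evaluated on a set `B`. -/
def hitProb {d : ℕ} {Ω : Type*} [MeasurableSpace Ω] (P : Measure Ω) (φ : ℝ → ℝ)
    (S : ℕ → Ω → Fin d → ℤ) (y : Fin d → ℤ) (lam : ℝ) (B : Set Ω) : ℝ :=
  (∫ ω, Set.indicator (hits S y ∩ B) (hitWeight φ S y lam) ω ∂P) /
    ∫ ω, Set.indicator (hits S y) (hitWeight φ S y lam) ω ∂P

section AuxMeasurability

variable {d : ℕ} {Ω : Type*} [MeasurableSpace Ω]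

lemma aux_measurable_comp_nat {g : ℕ → Ω → ℝ} (hg : ∀ n, Measurable (g n))
    {h : Ω → ℕ} (hh : Measurable h) : Measurable fun ω => g (h ω) ω := by
  intro A hA
  have heq : (fun ω => g (h ω) ω) ⁻¹' A = ⋃ n, h ⁻¹' {n} ∩ g n ⁻¹' A := by
    ext ω
    simp only [Set.mem_preimage, Set.mem_iUnion, Set.mem_inter_iff, Set.mem_singleton_iff]
    constructor
    · intro hm
      exact ⟨h ω, rfl, hm⟩
    · rintro ⟨n, h1, h2⟩
      rwa [h1]
  rw [heq]
  exact MeasurableSet.iUnion fun n => (hh (measurableSet_singleton n)).inter (hg n hA)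

lemma aux_measurable_hitTime {S : ℕ → Ω → Fin d → ℤ} (hSm : ∀ n, Measurable (S n))
    (x : Fin d → ℤ) : Measurable (hitTime S x) := by
  apply measurable_to_countable'
  intro k
  rcases Nat.eq_zero_or_pos k with hk | hk
  · subst hk
    have hset : hitTime S x ⁻¹' {0} = S 0 ⁻¹' {x} ∪ ⋂ n, (S n ⁻¹' {x})ᶜ := by
      ext ω
      simp only [Set.mem_preimage, Set.mem_singleton_iff, hitTime, Set.mem_union,
        Set.mem_iInter, Set.mem_compl_iff]
      constructor
      · intro h
        by_cases hne : ∃ n, S n ω = x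
        · left
          have hmem := Nat.sInf_mem (show {n : ℕ | S n ω = x}.Nonempty from hne)
          rw [h] at hmem
          exact hmem
        · right
          push_neg at hne
          exact hne
      · rintro (h | h)
        · exact Nat.sInf_eq_zero.2 (Or.inl h)
        · exact Nat.sInf_eq_zero.2 (Or.inr (Set.eq_empty_iff_forall_notMem.2 h))
    rw [hset]
    exact ((hSm 0) (measurableSet_singleton x)).union
      (MeasurableSet.iInter fun n => ((hSm n) (measurableSet_singleton x)).compl)
  · have hset : hitTime S x ⁻¹' {k} =
        S k ⁻¹' {x} ∩ ⋂ m ∈ Finset.range k, (S m ⁻¹' {x})ᶜ := by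
      ext ω
      simp only [Set.mem_preimage, Set.mem_singleton_iff, hitTime, Set.mem_inter_iff,
        Set.mem_iInter, Set.mem_compl_iff, Finset.mem_range]
      constructor
      · intro h
        have hne : {n : ℕ | S n ω = x}.Nonempty := by
          by_contra hc
          rw [Set.not_nonempty_iff_eq_empty] at hc
          rw [hc, Nat.sInf_empty] at h
          omega
        have hmem := Nat.sInf_mem hne
        rw [h] at hmem
        refine ⟨hmem, fun m hm hx => ?_⟩
        have := Nat.sInf_le (show m ∈ {n : ℕ | S n ω = x} from hx)
        omega
      · rintro ⟨h1, h2⟩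
        have hle := Nat.sInf_le (show k ∈ {n : ℕ | S n ω = x} from h1)
        have hmem := Nat.sInf_mem (show {n : ℕ | S n ω = x}.Nonempty from ⟨k, h1⟩)
        by_contra hne
        have hlt : sInf {n : ℕ | S n ω = x} < k := lt_of_le_of_ne hle hne
        exact h2 _ hlt hmem
    rw [hset]
    exact ((hSm k) (measurableSet_singleton x)).inter
      (MeasurableSet.biInter (Finset.range k).countable_toSet
        fun m _ => ((hSm m) (measurableSet_singleton x)).compl)

lemma aux_measurable_annPotential (φ : ℝ → ℝ) {S : ℕ → Ω → Fin d → ℤ}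
    (hSm : ∀ n, Measurable (S n)) (n : ℕ) : Measurable (annPotential φ S n) := by
  classical
  have key : annPotential φ S n = (fun t : Fin (n + 1) → Fin d → ℤ =>
      annPotential φ (fun m (_ : Unit) => t ⟨min m n, Nat.lt_succ_of_le (min_le_right m n)⟩) n ())
      ∘ (fun ω (m : Fin (n + 1)) => S (m : ℕ) ω) := by
    funext ω
    simp only [Function.comp_apply, annPotential]
    apply tsum_congr
    intro x
    congr 1
    unfold localTime
    congr 1
    refine congrArg Finset.card ?_
    apply Finset.filter_congr
    intro m hm
    have hmn : m ⊓ n = m := min_eq_left (Finset.mem_Icc.mp hm).2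
    simp [hmn]
  rw [key]
  exact Measurable.of_discrete.comp (measurable_pi_lambda _ fun m => hSm (m : ℕ))

lemma aux_measurableSet_hits {S : ℕ → Ω → Fin d → ℤ} (hSm : ∀ n, Measurable (S n))
    (x : Fin d → ℤ) : MeasurableSet (hits S x) := by
  have : hits S x = ⋃ n, S n ⁻¹' {x} := by
    ext ω
    simp [hits]
  rw [this]
  exact MeasurableSet.iUnion fun n => (hSm n) (measurableSet_singleton x)

lemma aux_measurable_hitWeight (φ : ℝ → ℝ) {S : ℕ → Ω → Fin d → ℤ}
    (hSm : ∀ n, Measurable (S n)) (x : Fin d → ℤ) (lam : ℝ) :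
    Measurable (hitWeight φ S x lam) := by
  have h1 : Measurable fun ω => ((hitTime S x ω : ℕ) : ℝ) :=
    (Measurable.of_discrete (f := fun n : ℕ => (n : ℝ))).comp (aux_measurable_hitTime hSm x)
  have h2 : Measurable fun ω => annPotential φ S (hitTime S x ω) ω :=
    aux_measurable_comp_nat (fun n => aux_measurable_annPotential φ hSm n)
      (aux_measurable_hitTime hSm x)
  unfold hitWeight
  exact (((h1.const_mul lam).neg).sub h2).exp

end AuxMeasurability

section AuxIntegral

variable {d : ℕ} {Ω : Type*} [MeasurableSpace Ω]

lemma aux_annPotential_nonneg {φ : ℝ → ℝ} (hφ : IsGoodPhi φ) {Ω' : Type*}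
    (S : ℕ → Ω' → Fin d → ℤ) (n : ℕ) (ω : Ω') : 0 ≤ annPotential φ S n ω :=
  tsum_nonneg fun x => hφ.2.1 _ (Nat.cast_nonneg _)

lemma aux_hitWeight_nonneg (φ : ℝ → ℝ) (S : ℕ → Ω → Fin d → ℤ)
    (x : Fin d → ℤ) (lam : ℝ) (ω : Ω) : 0 ≤ hitWeight φ S x lam ω := by
  unfold hitWeight
  exact (Real.exp_pos _).le

lemma aux_hitWeight_le_one {φ : ℝ → ℝ} (hφ : IsGoodPhi φ) {S : ℕ → Ω → Fin d → ℤ}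
    (x : Fin d → ℤ) {lam : ℝ} (hl : 0 ≤ lam) (ω : Ω) : hitWeight φ S x lam ω ≤ 1 := by
  unfold hitWeight
  rw [Real.exp_le_one_iff]
  have h1 : 0 ≤ lam * (hitTime S x ω : ℝ) := mul_nonneg hl (Nat.cast_nonneg _)
  have h2 := aux_annPotential_nonneg hφ S (hitTime S x ω) ω
  linarith

lemma aux_integrable_indicator (P : Measure Ω) [IsProbabilityMeasure P] {φ : ℝ → ℝ}
    (hφ : IsGoodPhi φ) {S : ℕ → Ω → Fin d → ℤ} (hSm : ∀ n, Measurable (S n))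
    (x : Fin d → ℤ) {lam : ℝ} (hl : 0 ≤ lam) {B : Set Ω} (hB : MeasurableSet B) :
    Integrable (Set.indicator B (hitWeight φ S x lam)) P := by
  refine Integrable.mono' (integrable_const (1 : ℝ))
    (((aux_measurable_hitWeight φ hSm x lam).indicator hB).aestronglyMeasurable)
    (ae_of_all _ fun ω => ?_)
  rw [Real.norm_eq_abs,
    abs_of_nonneg (Set.indicator_nonneg (fun a _ => aux_hitWeight_nonneg φ S x lam a) ω)]
  by_cases hω : ω ∈ B
  · rw [Set.indicator_of_mem hω]
    exact aux_hitWeight_le_one hφ x hl ω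
  · rw [Set.indicator_of_notMem hω]
    exact zero_le_one

lemma aux_stepDist_singleton {s : Fin d → ℤ} (hs : s ∈ unitSteps d) :
    stepDist d {s} = ((unitSteps d).card : ENNReal)⁻¹ := by
  classical
  unfold stepDist
  rw [Measure.smul_apply, Measure.finset_sum_apply]
  have h1 : ∀ t ∈ unitSteps d, Measure.dirac t {s} = if t = s then (1 : ENNReal) else 0 := by
    intro t _
    rw [Measure.dirac_apply' t (measurableSet_singleton s)]
    by_cases h : t = s <;> simp [h]
  rw [Finset.sum_congr rfl h1, Finset.sum_ite_eq' (unitSteps d) s (fun _ => (1 : ENNReal))]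
  simp [hs, smul_eq_mul]

lemma aux_exists_steps (hd : 0 < d) : ∀ (N : ℕ) (x : Fin d → ℤ), (∑ i, (x i).natAbs) = N →
    ∃ (k : ℕ) (g : ℕ → Fin d → ℤ), (∀ i, i < k → g i ∈ unitSteps d) ∧
      (∑ i ∈ Finset.range k, g i) = x := by
  intro N
  induction N with
  | zero =>
    intro x hx
    have hx0 : x = 0 := by
      funext i
      have := (Finset.sum_eq_zero_iff.mp hx) i (Finset.mem_univ i)
      exact Int.natAbs_eq_zero.mp this
    exact ⟨0, fun _ => 0, fun i hi => absurd hi (by omega), by simp [hx0]⟩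
  | succ N ih =>
    intro x hx
    classical
    have hex : ∃ i, x i ≠ 0 := by
      by_contra h
      push_neg at h
      simp only [h, Int.natAbs_zero, Finset.sum_const_zero] at hx
      omega
    obtain ⟨i, hi⟩ := hex
    set s : Fin d → ℤ := fun j => if j = i then (if 0 < x i then 1 else -1) else 0 with hs
    have hsu : s ∈ unitSteps d := by
      unfold unitSteps
      by_cases h0 : 0 < x i
      · refine Finset.mem_image.mpr ⟨(i, true), Finset.mem_univ _, ?_⟩
        funext j
        by_cases hj : j = i <;> simp [hs, hj, h0]
      · refine Finset.mem_image.mpr ⟨(i, false), Finset.mem_univ _, ?_⟩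
        funext j
        by_cases hj : j = i <;> simp [hs, hj, h0]
    have hsum : (∑ j, ((x - s) j).natAbs) = N := by
      have e1 : ((x - s) i).natAbs + 1 = (x i).natAbs := by
        by_cases h0 : 0 < x i <;> simp [hs, h0] <;> omega
      have e2 : ∀ j ∈ Finset.univ.erase i, ((x - s) j).natAbs = (x j).natAbs := by
        intro j hj
        have hji : j ≠ i := (Finset.mem_erase.mp hj).1
        simp [hs, hji]
      have d1 := (Finset.add_sum_erase Finset.univ (fun j => ((x - s) j).natAbs)
        (Finset.mem_univ i)).symm
      have d2 := (Finset.add_sum_erase Finset.univ (fun j => (x j).natAbs)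
        (Finset.mem_univ i)).symm
      rw [Finset.sum_congr rfl e2] at d1
      omega
    obtain ⟨k, g, hg, hgs⟩ := ih (x - s) hsum
    refine ⟨k + 1, fun m => if m = k then s else g m, ?_, ?_⟩
    · intro m hm
      by_cases hmk : m = k
      · simp [hmk, hsu]
      · simpa [hmk] using hg m (by omega)
    · rw [Finset.sum_range_succ, if_pos rfl,
        Finset.sum_congr rfl fun m hm => if_neg (Nat.ne_of_lt (Finset.mem_range.mp hm)), hgs]
      abel

lemma aux_hits_ne_zero (hd : 0 < d) (P : Measure Ω) [IsProbabilityMeasure P]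
    {S : ℕ → Ω → Fin d → ℤ} (hS : IsSRW P S) (x : Fin d → ℤ) : P (hits S x) ≠ 0 := by
  obtain ⟨hS0, hSm, hmap, hind⟩ := hS
  obtain ⟨k, g, hg, hgs⟩ := aux_exists_steps hd (∑ i, (x i).natAbs) x rfl
  have hsub : (⋂ i ∈ Finset.range k, (fun ω => S (i + 1) ω - S i ω) ⁻¹' {g i}) ⊆ hits S x := by
    intro ω hω
    simp only [Set.mem_iInter, Set.mem_preimage, Set.mem_singleton_iff, Finset.mem_range] at hω
    refine ⟨k, ?_⟩
    have htel : S k ω = ∑ i ∈ Finset.range k, (S (i + 1) ω - S i ω) := by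
      rw [Finset.sum_range_sub (f := fun n => S n ω), hS0 ω, sub_zero]
    rw [htel, Finset.sum_congr rfl fun i hi => hω i (Finset.mem_range.mp hi)]
    exact hgs
  have hmeas : ∀ i : ℕ, Measurable fun ω => S (i + 1) ω - S i ω :=
    fun i => (hSm (i + 1)).sub (hSm i)
  have hPE : P (⋂ i ∈ Finset.range k, (fun ω => S (i + 1) ω - S i ω) ⁻¹' {g i}) =
      ∏ i ∈ Finset.range k, P ((fun ω => S (i + 1) ω - S i ω) ⁻¹' {g i}) :=
    hind.meas_biInter fun i _ => ⟨{g i}, measurableSet_singleton _, rfl⟩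
  have hfac : ∀ i ∈ Finset.range k, P ((fun ω => S (i + 1) ω - S i ω) ⁻¹' {g i}) ≠ 0 := by
    intro i hi
    rw [← Measure.map_apply (hmeas i) (measurableSet_singleton _), hmap i,
      aux_stepDist_singleton (hg i (Finset.mem_range.mp hi))]
    exact ENNReal.inv_ne_zero.mpr (ENNReal.natCast_ne_top _)
  intro h0
  have hE0 : P (⋂ i ∈ Finset.range k, (fun ω => S (i + 1) ω - S i ω) ⁻¹' {g i}) = 0 :=
    le_antisymm (h0 ▸ measure_mono hsub) zero_le
  rw [hPE] at hE0
  exact (Finset.prod_ne_zero_iff.mpr hfac) hE0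

lemma aux_Z_pos (hd : 0 < d) (P : Measure Ω) [IsProbabilityMeasure P]
    {S : ℕ → Ω → Fin d → ℤ} (hS : IsSRW P S) {φ : ℝ → ℝ} (hφ : IsGoodPhi φ)
    (x : Fin d → ℤ) {lam : ℝ} (hl : 0 ≤ lam) :
    0 < ∫ ω, Set.indicator (hits S x) (hitWeight φ S x lam) ω ∂P := by
  have hnn : 0 ≤ Set.indicator (hits S x) (hitWeight φ S x lam) :=
    fun ω => Set.indicator_nonneg (fun a _ => aux_hitWeight_nonneg φ S x lam a) ω
  rw [integral_pos_iff_support_of_nonneg hnn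
    (aux_integrable_indicator P hφ hS.2.1 x hl (aux_measurableSet_hits hS.2.1 x))]
  have hsupp : Function.support (Set.indicator (hits S x) (hitWeight φ S x lam)) = hits S x := by
    rw [Set.support_indicator]
    have : Function.support (hitWeight φ S x lam) = Set.univ :=
      Set.eq_univ_of_forall fun ω => by
        unfold hitWeight
        exact (Real.exp_pos _).ne'
    rw [this, Set.inter_univ]
  rw [hsupp]
  exact pos_iff_ne_zero.mpr (aux_hits_ne_zero hd P hS x)

lemma aux_Z_eq_exp (hd : 0 < d) (P : Measure Ω) [IsProbabilityMeasure P]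
    {S : ℕ → Ω → Fin d → ℤ} (hS : IsSRW P S) {φ : ℝ → ℝ} (hφ : IsGoodPhi φ)
    (x : Fin d → ℤ) {lam : ℝ} (hl : 0 ≤ lam) :
    (∫ ω, Set.indicator (hits S x) (hitWeight φ S x lam) ω ∂P) =
      Real.exp (-(twoPointB P φ S lam x)) := by
  have h : twoPointB P φ S lam x =
      -Real.log (∫ ω, Set.indicator (hits S x) (hitWeight φ S x lam) ω ∂P) := rfl
  rw [h, neg_neg, Real.exp_log (aux_Z_pos hd P hS hφ x hl)]

end AuxIntegral

section AuxAnalysis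

lemma aux_slope_bounds {f : ℝ → ℝ} {lam : ℝ} (hlam : 0 < lam)
    (hconc : ConcaveOn ℝ (Ici 0) f) {γ δ : ℝ}
    (hγ : γ < derivWithin f (Ioi lam) lam) (hδ : derivWithin f (Iio lam) lam < δ) :
    (∃ t, lam < t ∧ γ * (t - lam) < f t - f lam) ∧
      (∃ t, 0 < t ∧ t < lam ∧ f lam - f t < δ * (lam - t)) := by
  have hmem : lam ∈ Ici (0 : ℝ) := le_of_lt hlam
  have hanti : AntitoneOn (slope f lam) (Ici 0 \ {lam}) := hconc.slope_anti hmem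
  constructor
  · have hsub : Ioi lam ⊆ Ici (0 : ℝ) \ {lam} :=
      fun t ht => ⟨le_of_lt (hlam.trans ht), ne_of_gt ht⟩
    have hanti' : AntitoneOn (slope f lam) (Ioi lam) := hanti.mono hsub
    have hmem2 : lam / 2 ∈ Ici (0 : ℝ) \ {lam} :=
      ⟨le_of_lt (half_pos hlam), ne_of_lt (half_lt_self hlam)⟩
    have hbdd : BddAbove (slope f lam '' Ioi lam) := by
      refine ⟨slope f lam (lam / 2), ?_⟩
      rintro v ⟨t, ht, rfl⟩
      exact hanti hmem2 (hsub ht) (le_of_lt ((half_lt_self hlam).trans ht))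
    have htend : Tendsto (slope f lam) (𝓝[>] lam) (𝓝 (sSup (slope f lam '' Ioi lam))) :=
      hanti'.tendsto_nhdsGT hbdd
    have hder : HasDerivWithinAt f (sSup (slope f lam '' Ioi lam)) (Ioi lam) lam :=
      (hasDerivWithinAt_iff_tendsto_slope' notMem_Ioi_self).mpr htend
    have heq : derivWithin f (Ioi lam) lam = sSup (slope f lam '' Ioi lam) :=
      hder.derivWithin (uniqueDiffWithinAt_Ioi lam)
    rw [heq] at hγ
    have hev : ∀ᶠ t in 𝓝[>] lam, γ < slope f lam t :=
      htend.eventually (eventually_gt_nhds hγ)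
    obtain ⟨t, hst, htmem⟩ := (hev.and self_mem_nhdsWithin).exists
    refine ⟨t, htmem, ?_⟩
    rw [slope_def_field] at hst
    have hpos : 0 < t - lam := sub_pos.2 htmem
    calc γ * (t - lam) < ((f t - f lam) / (t - lam)) * (t - lam) :=
          mul_lt_mul_of_pos_right hst hpos
    _ = f t - f lam := div_mul_cancel₀ _ (ne_of_gt hpos)
  · have hne : (Ioo (0 : ℝ) lam).Nonempty := ⟨lam / 2, half_pos hlam, half_lt_self hlam⟩
    have hsub : Ioo (0 : ℝ) lam ⊆ Ici 0 \ {lam} :=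
      fun t ht => ⟨le_of_lt ht.1, ne_of_lt ht.2⟩
    have hanti' : AntitoneOn (slope f lam) (Ioo 0 lam) := hanti.mono hsub
    have hmem2 : lam + 1 ∈ Ici (0 : ℝ) \ {lam} :=
      ⟨Set.mem_Ici.mpr (by linarith), by
        intro h
        rw [Set.mem_singleton_iff] at h
        linarith⟩
    have hbdd : BddBelow (slope f lam '' Ioo 0 lam) := by
      refine ⟨slope f lam (lam + 1), ?_⟩
      rintro v ⟨t, ht, rfl⟩
      exact hanti (hsub ht) hmem2 (by linarith [ht.2])
    have htend : Tendsto (slope f lam) (𝓝[<] lam) (𝓝 (sInf (slope f lam '' Ioo 0 lam))) :=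
      hanti'.tendsto_nhdsWithin_Ioo_left hne hbdd
    have hder : HasDerivWithinAt f (sInf (slope f lam '' Ioo 0 lam)) (Iio lam) lam :=
      (hasDerivWithinAt_iff_tendsto_slope' notMem_Iio_self).mpr htend
    have heq : derivWithin f (Iio lam) lam = sInf (slope f lam '' Ioo 0 lam) :=
      hder.derivWithin (uniqueDiffWithinAt_Iio lam)
    rw [heq] at hδ
    have hev : ∀ᶠ t in 𝓝[<] lam, slope f lam t < δ :=
      htend.eventually (eventually_lt_nhds hδ)
    obtain ⟨t, hst, htmem⟩ :=
      (hev.and (eventually_of_mem (Ioo_mem_nhdsLT hlam) fun z hz => hz)).exists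
    refine ⟨t, htmem.1, htmem.2, ?_⟩
    rw [slope_def_field] at hst
    have hpos : 0 < lam - t := sub_pos.2 htmem.2
    have heq2 : (f t - f lam) / (t - lam) = (f lam - f t) / (lam - t) := by
      rw [← neg_sub (f lam) (f t), ← neg_sub lam t, neg_div_neg_eq]
    rw [heq2] at hst
    calc f lam - f t = ((f lam - f t) / (lam - t)) * (lam - t) :=
          (div_mul_cancel₀ _ (ne_of_gt hpos)).symm
    _ < δ * (lam - t) := mul_lt_mul_of_pos_right hst hpos

lemma aux_isNorm_tendsto {d : ℕ} {f : (Fin d → ℝ) → ℝ} (hf : IsNorm f)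
    {xs : ℕ → Fin d → ℝ} {y : Fin d → ℝ} (h : Tendsto xs atTop (𝓝 y)) :
    Tendsto (fun n => f (xs n)) atTop (𝓝 (f y)) := by
  classical
  obtain ⟨hnn, heq, hhom, htri⟩ := hf
  have hf0 : f 0 = 0 := (heq 0).mpr rfl
  have hneg : ∀ v, f (-v) = f v := fun v => by
    have := hhom (-1) v
    simpa using this
  have hsum : ∀ (s : Finset (Fin d)) (g : Fin d → Fin d → ℝ),
      f (∑ i ∈ s, g i) ≤ ∑ i ∈ s, f (g i) := by
    intro s g
    induction s using Finset.induction with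
    | empty => simp [hf0]
    | insert _ _ hns ih =>
      rename_i a s'
      rw [Finset.sum_insert hns, Finset.sum_insert hns]
      exact le_trans (htri _ _) (by linarith)
  set e : Fin d → Fin d → ℝ := fun i j => if i = j then 1 else 0 with he
  have hcoord : ∀ v : Fin d → ℝ, f v ≤ ∑ i, |v i| * f (e i) := by
    intro v
    calc f v = f (∑ i, v i • e i) := by rw [← pi_eq_sum_univ v]
    _ ≤ ∑ i, f (v i • e i) := hsum _ _
    _ = ∑ i, |v i| * f (e i) := Finset.sum_congr rfl fun i _ => hhom _ _
  have hcoordlim : ∀ i : Fin d, Tendsto (fun n => |xs n i - y i| * f (e i)) atTop (𝓝 0) := by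
    intro i
    have h1 : Tendsto (fun n => xs n i) atTop (𝓝 (y i)) :=
      ((continuous_apply i).tendsto y).comp h
    have h2 : Tendsto (fun n => |xs n i - y i| * f (e i)) atTop (𝓝 (|y i - y i| * f (e i))) :=
      ((h1.sub tendsto_const_nhds).abs).mul_const _
    simpa using h2
  have hbound : Tendsto (fun n => ∑ i, |xs n i - y i| * f (e i)) atTop (𝓝 0) := by
    have := tendsto_finset_sum Finset.univ (fun i _ => hcoordlim i)
    simpa using this
  have hdiff : Tendsto (fun n => f (xs n) - f y) atTop (𝓝 0) := by
    apply squeeze_zero_norm _ hbound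
    intro n
    have k1 : f (xs n) - f y ≤ f (xs n - y) := by
      have := htri (xs n - y) y
      rw [sub_add_cancel] at this
      linarith
    have k2 : f y - f (xs n) ≤ f (xs n - y) := by
      have h3 := htri (y - xs n) (xs n)
      rw [sub_add_cancel] at h3
      have h4 : f (y - xs n) = f (xs n - y) := by rw [← neg_sub (xs n) y, hneg]
      linarith
    have k3 := hcoord (xs n - y)
    have k4 : ∑ i, |(xs n - y) i| * f (e i) = ∑ i, |xs n i - y i| * f (e i) := by
      apply Finset.sum_congr rfl
      intro i _
      rfl
    rw [Real.norm_eq_abs]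
    rw [abs_le]
    constructor <;> [linarith [k2, k3, k4.symm ▸ k3]; linarith [k1, k3]]
  have := hdiff.add (tendsto_const_nhds (x := f y))
  simpa using this

lemma aux_norm1Z_tendsto_atTop {d : ℕ} {ys : ℕ → Fin d → ℤ} {y : Fin d → ℝ} (hy : y ≠ 0)
    (hys : Tendsto (fun n : ℕ => fun i => ((ys n i : ℝ) / n)) atTop (𝓝 y)) :
    Tendsto (fun n => norm1Z (ys n)) atTop atTop := by
  classical
  have hcoord : ∀ i : Fin d, Tendsto (fun n => |(ys n i : ℝ) / n|) atTop (𝓝 |y i|) := by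
    intro i
    exact (((continuous_apply i).tendsto y).comp hys).abs
  have hsumt : Tendsto (fun n => ∑ i, |(ys n i : ℝ) / n|) atTop (𝓝 (∑ i, |y i|)) :=
    tendsto_finset_sum Finset.univ (fun i _ => hcoord i)
  have hcpos : 0 < ∑ i, |y i| := by
    have hex : ∃ i, y i ≠ 0 := Function.ne_iff.mp hy
    obtain ⟨i, hi⟩ := hex
    have h1 : 0 < |y i| := abs_pos.2 hi
    have h2 : |y i| ≤ ∑ j, |y j| :=
      Finset.single_le_sum (fun j _ => abs_nonneg (y j)) (Finset.mem_univ i)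
    linarith
  set c := ∑ i, |y i| with hc
  have hev : ∀ᶠ n in atTop, (c / 2) * n ≤ norm1Z (ys n) := by
    filter_upwards [hsumt.eventually (eventually_ge_nhds (by linarith : c / 2 < c)),
      eventually_ge_atTop 1] with n h1 hn
    have hn0 : (0 : ℝ) < n := by exact_mod_cast hn
    have heqn : norm1Z (ys n) = (∑ i, |(ys n i : ℝ) / n|) * n := by
      unfold norm1Z
      rw [Finset.sum_mul]
      apply Finset.sum_congr rfl
      intro i _
      rw [abs_div, abs_of_pos hn0, div_mul_cancel₀ _ (ne_of_gt hn0)]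
    rw [heqn]
    exact mul_le_mul_of_nonneg_right h1 hn0.le
  apply tendsto_atTop_mono' atTop hev
  have : Tendsto (fun n : ℕ => (n : ℝ)) atTop atTop := tendsto_natCast_atTop_atTop
  exact Tendsto.const_mul_atTop (by linarith : 0 < c / 2) this

lemma aux_b_div_n {d : ℕ} {Ω : Type*} [MeasurableSpace Ω] (P : Measure Ω)
    {φ : ℝ → ℝ} {S : ℕ → Ω → Fin d → ℤ} {β : ℝ → (Fin d → ℝ) → ℝ}
    (hβnorm : ∀ lam : ℝ, 0 ≤ lam → IsNorm (β lam)) (hβshape : AnShape P φ S β)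
    {ys : ℕ → Fin d → ℤ} {y : Fin d → ℝ} (hy : y ≠ 0)
    (hys : Tendsto (fun n : ℕ => fun i => ((ys n i : ℝ) / n)) atTop (𝓝 y))
    {lam : ℝ} (hl : 0 ≤ lam) :
    Tendsto (fun n : ℕ => twoPointB P φ S lam (ys n) / n) atTop (𝓝 (β lam y)) := by
  have hnorm1 := aux_norm1Z_tendsto_atTop hy hys
  have h1 := hβshape lam hl ys hnorm1
  have hbc : Tendsto (fun n : ℕ => β lam (fun i => ((ys n i : ℝ) / n))) atTop (𝓝 (β lam y)) :=
    aux_isNorm_tendsto (hβnorm lam hl) hys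
  have h2 : Tendsto (fun n : ℕ => β lam (zToR (ys n)) / n) atTop (𝓝 (β lam y)) := by
    apply hbc.congr'
    filter_upwards [eventually_ge_atTop 1] with n hn
    have hn0 : (0 : ℝ) < n := by exact_mod_cast hn
    have hfun : (fun i => ((ys n i : ℝ) / n)) = (n : ℝ)⁻¹ • zToR (ys n) := by
      funext i
      simp [zToR, div_eq_inv_mul]
    rw [hfun, (hβnorm lam hl).2.2.1, abs_of_pos (inv_pos.2 hn0), inv_mul_eq_div]
  have hynz : ∀ᶠ n in atTop, β lam (zToR (ys n)) ≠ 0 := by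
    filter_upwards [hnorm1.eventually_gt_atTop 0] with n hn
    intro h0
    have hz : zToR (ys n) = 0 := ((hβnorm lam hl).2.1 _).mp h0
    have hnz : norm1Z (ys n) = 0 := by
      unfold norm1Z
      apply Finset.sum_eq_zero
      intro i _
      have := congrFun hz i
      simp only [zToR] at this
      simp [this]
    linarith
  have hmul := h1.mul h2
  rw [one_mul] at hmul
  apply hmul.congr'
  filter_upwards [hynz] with n hn
  rw [div_mul_div_comm, mul_comm (twoPointB P φ S lam (ys n)) (β lam (zToR (ys n))),
    mul_div_mul_left _ _ hn]

end AuxAnalysis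

/-- **Law of large numbers under the tilted measures** (Flury, Lemma 6). If `y_n/n → y ≠ 0`,
then for every `λ > 0` and all `γ < ∂⁺_λ β_λ(y) ≤ ∂⁻_λ β_λ(y) < δ` one has
`P^{y_n}_λ[H(y_n)/n ∈ [γ, δ]] → 1`. -/
theorem tilted_hitting_time_LLN
    {d : ℕ} (hd : 0 < d)
    {Ω : Type*} [MeasurableSpace Ω] (P : Measure Ω) [IsProbabilityMeasure P]
    (S : ℕ → Ω → Fin d → ℤ) (hS : IsSRW P S)
    (φ : ℝ → ℝ) (hφ : IsGoodPhi φ)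
    (β : ℝ → (Fin d → ℝ) → ℝ)
    (hβnorm : ∀ lam : ℝ, 0 ≤ lam → IsNorm (β lam))
    (hβconc : ∀ x : Fin d → ℝ, ConcaveOn ℝ (Ici 0) (fun lam => β lam x))
    (hβshape : AnShape P φ S β)
    (ys : ℕ → Fin d → ℤ) (y : Fin d → ℝ) (hy : y ≠ 0)
    (hys : Tendsto (fun n : ℕ => fun i => ((ys n i : ℝ) / n)) atTop (𝓝 y))
    (lam : ℝ) (hlam : 0 < lam) (γ δ : ℝ)
    (hγ : γ < derivWithin (fun l => β l y) (Ioi lam) lam)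
    (hmid : derivWithin (fun l => β l y) (Ioi lam) lam ≤
      derivWithin (fun l => β l y) (Iio lam) lam)
    (hδ : derivWithin (fun l => β l y) (Iio lam) lam < δ) :
    Tendsto (fun n : ℕ => hitProb P φ S (ys n) lam
        {ω | γ ≤ (hitTime S (ys n) ω : ℝ) / n ∧ (hitTime S (ys n) ω : ℝ) / n ≤ δ})
      atTop (𝓝 1) := by
  classical
  have hSm : ∀ n, Measurable (S n) := hS.2.1
  obtain ⟨⟨t₂, ht₂lam, hslope₂'⟩, ⟨t₁, ht₁0, ht₁lam, hslope₁'⟩⟩ :=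
    aux_slope_bounds hlam (hβconc y) hγ hδ
  have hslope₂ : γ * (t₂ - lam) < β t₂ y - β lam y := hslope₂'
  have hslope₁ : β lam y - β t₁ y < δ * (lam - t₁) := hslope₁'
  have hlam0 : (0 : ℝ) ≤ lam := hlam.le
  have ht₁nn : (0 : ℝ) ≤ t₁ := ht₁0.le
  have ht₂nn : (0 : ℝ) ≤ t₂ := (hlam.trans ht₂lam).le
  set b : ℝ → ℕ → ℝ := fun l n => twoPointB P φ S l (ys n) with hbdef
  set Z : ℝ → ℕ → ℝ := fun l n =>
    ∫ ω, Set.indicator (hits S (ys n)) (hitWeight φ S (ys n) l) ω ∂P with hZdef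
  have hZpos : ∀ l : ℝ, 0 ≤ l → ∀ n, 0 < Z l n := by
    intro l hl n
    rw [hZdef]
    exact aux_Z_pos hd P hS hφ (ys n) hl
  have hZexp : ∀ (l : ℝ), 0 ≤ l → ∀ n, Z l n = Real.exp (-(b l n)) := by
    intro l hl n
    rw [hZdef, hbdef]
    exact aux_Z_eq_exp hd P hS hφ (ys n) hl
  set Bev : ℕ → Set Ω := fun n =>
    {ω | γ ≤ (hitTime S (ys n) ω : ℝ) / n ∧ (hitTime S (ys n) ω : ℝ) / n ≤ δ} with hBdef
  set Lev : ℕ → Set Ω := fun n => {ω | (hitTime S (ys n) ω : ℝ) / n < γ} with hLdef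
  set Uev : ℕ → Set Ω := fun n => {ω | δ < (hitTime S (ys n) ω : ℝ) / n} with hUdef
  have hHm : ∀ n : ℕ, Measurable fun ω => (hitTime S (ys n) ω : ℝ) / n :=
    fun n => ((Measurable.of_discrete (f := fun k : ℕ => (k : ℝ))).comp
      (aux_measurable_hitTime hSm (ys n))).div_const _
  have hBm : ∀ n, MeasurableSet (Bev n) := fun n =>
    (measurableSet_le measurable_const (hHm n)).inter
      (measurableSet_le (hHm n) measurable_const)
  have hLm : ∀ n, MeasurableSet (Lev n) := fun n => measurableSet_lt (hHm n) measurable_const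
  have hUm : ∀ n, MeasurableSet (Uev n) := fun n => measurableSet_lt measurable_const (hHm n)
  have hhitm : ∀ n, MeasurableSet (hits S (ys n)) := fun n => aux_measurableSet_hits hSm (ys n)
  set IB : ℕ → ℝ := fun n =>
    ∫ ω, Set.indicator (hits S (ys n) ∩ Bev n) (hitWeight φ S (ys n) lam) ω ∂P with hIBdef
  set IL : ℕ → ℝ := fun n =>
    ∫ ω, Set.indicator (hits S (ys n) ∩ Lev n) (hitWeight φ S (ys n) lam) ω ∂P with hILdef
  set IU : ℕ → ℝ := fun n =>
    ∫ ω, Set.indicator (hits S (ys n) ∩ Uev n) (hitWeight φ S (ys n) lam) ω ∂P with hIUdef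
  have hintB : ∀ n, Integrable
      (Set.indicator (hits S (ys n) ∩ Bev n) (hitWeight φ S (ys n) lam)) P :=
    fun n => aux_integrable_indicator P hφ hSm (ys n) hlam0 ((hhitm n).inter (hBm n))
  have hintL : ∀ n, Integrable
      (Set.indicator (hits S (ys n) ∩ Lev n) (hitWeight φ S (ys n) lam)) P :=
    fun n => aux_integrable_indicator P hφ hSm (ys n) hlam0 ((hhitm n).inter (hLm n))
  have hintU : ∀ n, Integrable
      (Set.indicator (hits S (ys n) ∩ Uev n) (hitWeight φ S (ys n) lam)) P :=
    fun n => aux_integrable_indicator P hφ hSm (ys n) hlam0 ((hhitm n).inter (hUm n))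
  have hintZ : ∀ (l : ℝ), 0 ≤ l → ∀ n, Integrable
      (Set.indicator (hits S (ys n)) (hitWeight φ S (ys n) l)) P :=
    fun l hl n => aux_integrable_indicator P hφ hSm (ys n) hl (hhitm n)
  -- decomposition
  have hdecomp : ∀ n, Z lam n = IB n + IL n + IU n := by
    intro n
    have hpt : ∀ ω, Set.indicator (hits S (ys n)) (hitWeight φ S (ys n) lam) ω =
        Set.indicator (hits S (ys n) ∩ Bev n) (hitWeight φ S (ys n) lam) ω +
        Set.indicator (hits S (ys n) ∩ Lev n) (hitWeight φ S (ys n) lam) ω +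
        Set.indicator (hits S (ys n) ∩ Uev n) (hitWeight φ S (ys n) lam) ω := by
      intro ω
      by_cases hh : ω ∈ hits S (ys n)
      · by_cases h1 : (hitTime S (ys n) ω : ℝ) / n < γ
        · have hBx : ω ∉ hits S (ys n) ∩ Bev n := fun hc => absurd hc.2.1 (not_le.mpr h1)
          have hUx : ω ∉ hits S (ys n) ∩ Uev n := by
            intro hc
            have h2 : δ < (hitTime S (ys n) ω : ℝ) / n := hc.2
            have hγδ : γ < δ := hγ.trans_le (hmid.trans_lt hδ).le
            linarith
          have hmemL : ω ∈ hits S (ys n) ∩ Lev n := Set.mem_inter hh h1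
          rw [Set.indicator_of_mem hh, Set.indicator_of_mem hmemL,
            Set.indicator_of_notMem hBx, Set.indicator_of_notMem hUx]
          ring
        · by_cases h2 : δ < (hitTime S (ys n) ω : ℝ) / n
          · have hBx : ω ∉ hits S (ys n) ∩ Bev n := fun hc => absurd hc.2.2 (not_le.mpr h2)
            have hLx : ω ∉ hits S (ys n) ∩ Lev n := fun hc => absurd hc.2 h1
            have hmemU : ω ∈ hits S (ys n) ∩ Uev n := Set.mem_inter hh h2
            rw [Set.indicator_of_mem hh, Set.indicator_of_mem hmemU,
              Set.indicator_of_notMem hBx, Set.indicator_of_notMem hLx]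
            ring
          · have hBx : ω ∈ hits S (ys n) ∩ Bev n :=
              Set.mem_inter hh (Set.mem_setOf.mpr ⟨not_lt.mp h1, not_lt.mp h2⟩)
            have hLx : ω ∉ hits S (ys n) ∩ Lev n := fun hc => absurd hc.2 h1
            have hUx : ω ∉ hits S (ys n) ∩ Uev n := fun hc => absurd hc.2 h2
            rw [Set.indicator_of_mem hh, Set.indicator_of_mem hBx,
              Set.indicator_of_notMem hLx, Set.indicator_of_notMem hUx]
            ring
      · rw [Set.indicator_of_notMem hh,
          Set.indicator_of_notMem (fun hc => hh hc.1),
          Set.indicator_of_notMem (fun hc => hh hc.1),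
          Set.indicator_of_notMem (fun hc => hh hc.1)]
        ring
    rw [hZdef, hIBdef, hILdef, hIUdef]
    beta_reduce
    calc (∫ ω, Set.indicator (hits S (ys n)) (hitWeight φ S (ys n) lam) ω ∂P)
        = ∫ ω, (Set.indicator (hits S (ys n) ∩ Bev n) (hitWeight φ S (ys n) lam) ω +
          Set.indicator (hits S (ys n) ∩ Lev n) (hitWeight φ S (ys n) lam) ω +
          Set.indicator (hits S (ys n) ∩ Uev n) (hitWeight φ S (ys n) lam) ω) ∂P :=
        integral_congr_ae (ae_of_all _ hpt)
    _ = (∫ ω, (Set.indicator (hits S (ys n) ∩ Bev n) (hitWeight φ S (ys n) lam) ω +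
          Set.indicator (hits S (ys n) ∩ Lev n) (hitWeight φ S (ys n) lam) ω) ∂P) +
        ∫ ω, Set.indicator (hits S (ys n) ∩ Uev n) (hitWeight φ S (ys n) lam) ω ∂P :=
        integral_add ((hintB n).add (hintL n)) (hintU n)
    _ = _ := by
        rw [integral_add (hintB n) (hintL n)]
  -- Chebyshev bounds
  have hIUle : ∀ n : ℕ, IU n ≤ Real.exp (-((lam - t₁) * (δ * n))) * Z t₁ n := by
    intro n
    have hptw : ∀ ω, Set.indicator (hits S (ys n) ∩ Uev n) (hitWeight φ S (ys n) lam) ω ≤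
        Real.exp (-((lam - t₁) * (δ * n))) *
          Set.indicator (hits S (ys n)) (hitWeight φ S (ys n) t₁) ω := by
      intro ω
      by_cases hω : ω ∈ hits S (ys n) ∩ Uev n
      · rw [Set.indicator_of_mem hω, Set.indicator_of_mem hω.1]
        unfold hitWeight
        rw [← Real.exp_add]
        apply Real.exp_le_exp.mpr
        have hU : δ * n ≤ ((hitTime S (ys n) ω : ℕ) : ℝ) := by
          rcases Nat.eq_zero_or_pos n with h | h
          · have h0 : (n : ℝ) = 0 := by exact_mod_cast h
            rw [h0, mul_zero]
            exact Nat.cast_nonneg _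
          · have hn0 : (0 : ℝ) < n := by exact_mod_cast h
            have h2 : δ < (hitTime S (ys n) ω : ℝ) / n := hω.2
            calc δ * n ≤ ((hitTime S (ys n) ω : ℝ) / n) * n :=
                  mul_le_mul_of_nonneg_right h2.le hn0.le
            _ = _ := div_mul_cancel₀ _ (ne_of_gt hn0)
        have hfac : (0 : ℝ) ≤ lam - t₁ := by linarith
        have hkey := mul_le_mul_of_nonneg_left hU hfac
        linarith
      · rw [Set.indicator_of_notMem hω]
        exact mul_nonneg (Real.exp_pos _).le
          (Set.indicator_nonneg (fun a _ => aux_hitWeight_nonneg φ S (ys n) t₁ a) ω)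
    rw [hIUdef, hZdef]
    beta_reduce
    calc (∫ ω, Set.indicator (hits S (ys n) ∩ Uev n) (hitWeight φ S (ys n) lam) ω ∂P)
        ≤ ∫ ω, Real.exp (-((lam - t₁) * (δ * n))) *
          Set.indicator (hits S (ys n)) (hitWeight φ S (ys n) t₁) ω ∂P :=
        integral_mono (hintU n) ((hintZ t₁ ht₁nn n).const_mul _) hptw
    _ = _ := by rw [integral_const_mul]
  have hILle : ∀ n : ℕ, 1 ≤ n → IL n ≤ Real.exp ((t₂ - lam) * (γ * n)) * Z t₂ n := by
    intro n hn
    have hn0 : (0 : ℝ) < n := by exact_mod_cast hn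
    have hptw : ∀ ω, Set.indicator (hits S (ys n) ∩ Lev n) (hitWeight φ S (ys n) lam) ω ≤
        Real.exp ((t₂ - lam) * (γ * n)) *
          Set.indicator (hits S (ys n)) (hitWeight φ S (ys n) t₂) ω := by
      intro ω
      by_cases hω : ω ∈ hits S (ys n) ∩ Lev n
      · rw [Set.indicator_of_mem hω, Set.indicator_of_mem hω.1]
        unfold hitWeight
        rw [← Real.exp_add]
        apply Real.exp_le_exp.mpr
        have hL : ((hitTime S (ys n) ω : ℕ) : ℝ) ≤ γ * n := by
          have h2 : (hitTime S (ys n) ω : ℝ) / n < γ := hω.2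
          calc ((hitTime S (ys n) ω : ℕ) : ℝ)
              = ((hitTime S (ys n) ω : ℝ) / n) * n := (div_mul_cancel₀ _ (ne_of_gt hn0)).symm
          _ ≤ γ * n := mul_le_mul_of_nonneg_right h2.le hn0.le
        have hfac : (0 : ℝ) ≤ t₂ - lam := by linarith
        have hkey := mul_le_mul_of_nonneg_left hL hfac
        linarith
      · rw [Set.indicator_of_notMem hω]
        exact mul_nonneg (Real.exp_pos _).le
          (Set.indicator_nonneg (fun a _ => aux_hitWeight_nonneg φ S (ys n) t₂ a) ω)
    rw [hILdef, hZdef]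
    beta_reduce
    calc (∫ ω, Set.indicator (hits S (ys n) ∩ Lev n) (hitWeight φ S (ys n) lam) ω ∂P)
        ≤ ∫ ω, Real.exp ((t₂ - lam) * (γ * n)) *
          Set.indicator (hits S (ys n)) (hitWeight φ S (ys n) t₂) ω ∂P :=
        integral_mono (hintL n) ((hintZ t₂ ht₂nn n).const_mul _) hptw
    _ = _ := by rw [integral_const_mul]
  -- ratio bounds
  set bndU : ℕ → ℝ := fun n => Real.exp (b lam n - b t₁ n - (lam - t₁) * (δ * n)) with hbndUdef
  set bndL : ℕ → ℝ := fun n => Real.exp (b lam n - b t₂ n + (t₂ - lam) * (γ * n)) with hbndLdef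
  have hratU : ∀ n, IU n / Z lam n ≤ bndU n := by
    intro n
    rw [div_le_iff₀ (hZpos lam hlam0 n)]
    calc IU n ≤ Real.exp (-((lam - t₁) * (δ * n))) * Z t₁ n := hIUle n
    _ = bndU n * Z lam n := by
        rw [hZexp t₁ ht₁nn n, hZexp lam hlam0 n, hbndUdef, ← Real.exp_add, ← Real.exp_add]
        congr 1
        ring
  have hratL : ∀ n, 1 ≤ n → IL n / Z lam n ≤ bndL n := by
    intro n hn
    rw [div_le_iff₀ (hZpos lam hlam0 n)]
    calc IL n ≤ Real.exp ((t₂ - lam) * (γ * n)) * Z t₂ n := hILle n hn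
    _ = bndL n * Z lam n := by
        rw [hZexp t₂ ht₂nn n, hZexp lam hlam0 n, hbndLdef, ← Real.exp_add, ← Real.exp_add]
        congr 1
        ring
  -- limits of bounds
  have hblam := aux_b_div_n P hβnorm hβshape hy hys hlam0
  have hb1 := aux_b_div_n P hβnorm hβshape hy hys ht₁nn
  have hb2 := aux_b_div_n P hβnorm hβshape hy hys ht₂nn
  have hbndU0 : Tendsto bndU atTop (𝓝 0) := by
    have hKneg : β lam y - β t₁ y - δ * (lam - t₁) < 0 := by linarith
    have hu : Tendsto (fun n : ℕ => b lam n / n - b t₁ n / n - δ * (lam - t₁)) atTop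
        (𝓝 (β lam y - β t₁ y - δ * (lam - t₁))) := by
      rw [hbdef]
      exact (hblam.sub hb1).sub tendsto_const_nhds
    have hexp : Tendsto (fun n : ℕ => b lam n - b t₁ n - (lam - t₁) * (δ * n)) atTop atBot := by
      set K := β lam y - β t₁ y - δ * (lam - t₁) with hKdef
      have hev : ∀ᶠ n in atTop,
          b lam n - b t₁ n - (lam - t₁) * (δ * n) ≤ (K / 2) * n := by
        filter_upwards [hu.eventually (eventually_le_nhds (by linarith : K < K / 2)),
          eventually_ge_atTop 1] with n h1 hn
        have hn0 : (0 : ℝ) < n := by exact_mod_cast hn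
        have halg : b lam n - b t₁ n - (lam - t₁) * (δ * n) =
            (b lam n / n - b t₁ n / n - δ * (lam - t₁)) * n := by
          field_simp
        rw [halg]
        exact mul_le_mul_of_nonneg_right h1 hn0.le
      have hbase : Tendsto (fun n : ℕ => (K / 2) * (n : ℝ)) atTop atBot :=
        (tendsto_const_mul_atBot_of_neg (by linarith : K / 2 < 0)).mpr
          tendsto_natCast_atTop_atTop
      exact tendsto_atBot_mono' atTop hev hbase
    exact Real.tendsto_exp_atBot.comp hexp
  have hbndL0 : Tendsto bndL atTop (𝓝 0) := by
    have hKneg : β lam y - β t₂ y + γ * (t₂ - lam) < 0 := by linarith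
    have hu : Tendsto (fun n : ℕ => b lam n / n - b t₂ n / n + γ * (t₂ - lam)) atTop
        (𝓝 (β lam y - β t₂ y + γ * (t₂ - lam))) := by
      rw [hbdef]
      exact (hblam.sub hb2).add tendsto_const_nhds
    have hexp : Tendsto (fun n : ℕ => b lam n - b t₂ n + (t₂ - lam) * (γ * n)) atTop atBot := by
      set K := β lam y - β t₂ y + γ * (t₂ - lam) with hKdef
      have hev : ∀ᶠ n in atTop,
          b lam n - b t₂ n + (t₂ - lam) * (γ * n) ≤ (K / 2) * n := by
        filter_upwards [hu.eventually (eventually_le_nhds (by linarith : K < K / 2)),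
          eventually_ge_atTop 1] with n h1 hn
        have hn0 : (0 : ℝ) < n := by exact_mod_cast hn
        have halg : b lam n - b t₂ n + (t₂ - lam) * (γ * n) =
            (b lam n / n - b t₂ n / n + γ * (t₂ - lam)) * n := by
          field_simp
        rw [halg]
        exact mul_le_mul_of_nonneg_right h1 hn0.le
      have hbase : Tendsto (fun n : ℕ => (K / 2) * (n : ℝ)) atTop atBot :=
        (tendsto_const_mul_atBot_of_neg (by linarith : K / 2 < 0)).mpr
          tendsto_natCast_atTop_atTop
      exact tendsto_atBot_mono' atTop hev hbase
    exact Real.tendsto_exp_atBot.comp hexp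
  -- assembling
  have hILnn : ∀ n, 0 ≤ IL n := by
    intro n
    rw [hILdef]
    exact integral_nonneg fun ω =>
      Set.indicator_nonneg (fun a _ => aux_hitWeight_nonneg φ S (ys n) lam a) ω
  have hIUnn : ∀ n, 0 ≤ IU n := by
    intro n
    rw [hIUdef]
    exact integral_nonneg fun ω =>
      Set.indicator_nonneg (fun a _ => aux_hitWeight_nonneg φ S (ys n) lam a) ω
  have hprob_eq : ∀ n, hitProb P φ S (ys n) lam (Bev n) = IB n / Z lam n := by
    intro n
    rw [hIBdef, hZdef]
    rfl
  show Tendsto (fun n : ℕ => hitProb P φ S (ys n) lam (Bev n)) atTop (𝓝 1)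
  have hupper : ∀ n : ℕ, hitProb P φ S (ys n) lam (Bev n) ≤ 1 := by
    intro n
    have hle : IB n ≤ Z lam n := by
      rw [hIBdef, hZdef]
      refine integral_mono (hintB n) (hintZ lam hlam0 n) ?_
      exact Set.indicator_le_indicator_of_subset Set.inter_subset_left
        (fun a => aux_hitWeight_nonneg φ S (ys n) lam a)
    rw [hprob_eq n, div_le_one (hZpos lam hlam0 n)]
    exact hle
  have hlower : ∀ᶠ n in atTop,
      1 - (bndL n + bndU n) ≤ hitProb P φ S (ys n) lam (Bev n) := by
    filter_upwards [eventually_ge_atTop 1] with n hn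
    have hz := hZpos lam hlam0 n
    have hIBeq : IB n = Z lam n - IL n - IU n := by linarith [hdecomp n]
    rw [hprob_eq n, hIBeq, sub_div, sub_div, div_self (ne_of_gt hz)]
    have h1 : IL n / Z lam n ≤ bndL n := hratL n hn
    have h2 : IU n / Z lam n ≤ bndU n := hratU n
    linarith
  have hone : Tendsto (fun n => 1 - (bndL n + bndU n)) atTop (𝓝 1) := by
    have := (hbndL0.add hbndU0).const_sub (1 : ℝ)
    simpa using this
  exact tendsto_of_tendsto_of_tendsto_of_le_of_le' hone tendsto_const_nhds hlower
    (Filter.Eventually.of_forall hupper)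

end RWRP
end
end

section
/- For every λ ≥ 0 and every x ∈ ℤ^d, the annealed two-point function satisfies ‖x‖₁(λ + φ(1)) ≤ b_λ(x) ≤ ‖x‖₁(λ + log(2d) + φ(1)). -/
open MeasureTheory ProbabilityTheory Filter Topology Set Pointwise

noncomputable section

namespace RWRP

/-! ### Auxiliary material -/

/-- The `ℓ¹` norm of `x : ℤ^d` as a natural number. -/
def natNorm {d : ℕ} (x : Fin d → ℤ) : ℕ := ∑ i, (x i).natAbs

lemma norm1Z_eq_natNorm {d : ℕ} (x : Fin d → ℤ) : norm1Z x = (natNorm x : ℝ) := by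
  rw [norm1Z, natNorm, Nat.cast_sum]
  refine Finset.sum_congr rfl fun i _ => ?_
  rw [Nat.cast_natAbs, Int.cast_abs]

lemma natNorm_add_le {d : ℕ} (a b : Fin d → ℤ) :
    natNorm (a + b) ≤ natNorm a + natNorm b := by
  rw [natNorm, natNorm, natNorm, ← Finset.sum_add_distrib]
  exact Finset.sum_le_sum fun i _ => Int.natAbs_add_le _ _

lemma natNorm_zero {d : ℕ} : natNorm (0 : Fin d → ℤ) = 0 := by simp [natNorm]

lemma natNorm_eq_zero {d : ℕ} {x : Fin d → ℤ} (h : natNorm x = 0) : x = 0 := by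
  rw [natNorm, Finset.sum_eq_zero_iff] at h
  funext i
  simpa [Int.natAbs_eq_zero] using h i (Finset.mem_univ i)

/-- A single coordinate step. -/
def stepVec {d : ℕ} (i : Fin d) (b : Bool) : Fin d → ℤ :=
  fun j => if j = i then (if b then 1 else -1) else 0

lemma stepVec_mem {d : ℕ} (i : Fin d) (b : Bool) : stepVec i b ∈ unitSteps d :=
  Finset.mem_image.2 ⟨(i, b), Finset.mem_univ _, rfl⟩

lemma mem_unitSteps {d : ℕ} {s : Fin d → ℤ} (hs : s ∈ unitSteps d) :
    ∃ i b, s = stepVec i b := by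
  rcases Finset.mem_image.1 hs with ⟨⟨i, b⟩, _, rfl⟩
  exact ⟨i, b, rfl⟩

lemma natNorm_stepVec {d : ℕ} (i : Fin d) (b : Bool) : natNorm (stepVec i b) = 1 := by
  rw [natNorm]
  have : ∀ j, (stepVec i b j).natAbs = if j = i then 1 else 0 := by
    intro j; rcases b with _ | _ <;> simp [stepVec] <;> split <;> simp
  simp only [this]
  simp

lemma stepVec_injective {d : ℕ} :
    Function.Injective (fun p : Fin d × Bool => stepVec p.1 p.2) := by
  rintro ⟨i, b⟩ ⟨j, c⟩ h
  have hi := congrFun h i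
  by_cases hij : i = j
  · subst hij
    simp only [stepVec, if_pos rfl] at hi
    rcases b with _ | _ <;> rcases c with _ | _ <;> simp_all
  · simp only [stepVec, if_pos rfl, if_neg (Ne.symm hij)] at hi
    rcases b with _ | _ <;> simp_all

lemma card_unitSteps (d : ℕ) : (unitSteps d).card = 2 * d := by
  have : unitSteps d = Finset.univ.image (fun p : Fin d × Bool => stepVec p.1 p.2) := rfl
  rw [this, Finset.card_image_of_injective _ stepVec_injective, Finset.card_univ,
    Fintype.card_prod, Fintype.card_fin, Fintype.card_bool]
  ring

lemma stepDist_singleton {d : ℕ} {s : Fin d → ℤ} (hs : s ∈ unitSteps d) :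
    stepDist d {s} = ((2 * d : ℕ) : ENNReal)⁻¹ := by
  rw [stepDist, Measure.smul_apply, Measure.finset_sum_apply]
  have : ∀ t ∈ unitSteps d, Measure.dirac t ({s} : Set (Fin d → ℤ))
      = if t = s then 1 else 0 := by
    intro t _
    rw [Measure.dirac_apply]
    by_cases h : t = s <;> simp [Set.indicator_apply, h]
  rw [Finset.sum_congr rfl this, Finset.sum_ite_eq' (unitSteps d) s (fun _ => (1 : ENNReal)),
    if_pos hs, card_unitSteps]
  simp [ENNReal.inv_mul_cancel]

lemma stepDist_compl (d : ℕ) : stepDist d ((unitSteps d : Set (Fin d → ℤ)))ᶜ = 0 := by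
  rw [stepDist, Measure.smul_apply, Measure.finset_sum_apply]
  have : ∀ t ∈ unitSteps d,
      Measure.dirac t ((unitSteps d : Set (Fin d → ℤ)))ᶜ = 0 := by
    intro t ht
    rw [Measure.dirac_apply]
    simp [Set.indicator_apply, ht]
  rw [Finset.sum_congr rfl this]
  simp

/-- The `ℓ¹` ball of radius `n` in `ℤ^d`, as a finset. -/
def ballF (d n : ℕ) : Finset (Fin d → ℤ) :=
  Fintype.piFinset fun _ => Finset.Icc (-(n : ℤ)) (n : ℤ)

lemma mem_ballF {d n : ℕ} {y : Fin d → ℤ} (h : natNorm y ≤ n) : y ∈ ballF d n := by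
  rw [ballF, Fintype.mem_piFinset]
  intro i
  have h1 : (y i).natAbs ≤ natNorm y :=
    Finset.single_le_sum (f := fun j => (y j).natAbs) (fun j _ => Nat.zero_le _)
      (Finset.mem_univ i)
  have h2 : |y i| ≤ (n : ℤ) := by
    rw [Int.abs_eq_natAbs]
    exact_mod_cast le_trans h1 h
  rw [Finset.mem_Icc]
  exact abs_le.mp h2

/-- Truncated version of the annealed potential, summing only over the ball of radius `n`. -/
def Psi {d : ℕ} {Ω : Type*} (φ : ℝ → ℝ) (S : ℕ → Ω → Fin d → ℤ) (n : ℕ) (ω : Ω) : ℝ :=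
  ∑ y ∈ ballF d n, φ (localTime S y n ω)

lemma localTime_card {d : ℕ} {Ω : Type*} (S : ℕ → Ω → Fin d → ℤ) (y : Fin d → ℤ)
    (n : ℕ) (ω : Ω) :
    localTime S y n ω = ∑ m ∈ Finset.Icc 1 n, if S m ω = y then 1 else 0 := by
  rw [localTime, Finset.card_filter]

lemma localTime_eq_zero {d : ℕ} {Ω : Type*} {S : ℕ → Ω → Fin d → ℤ} {y : Fin d → ℤ}
    {n : ℕ} {ω : Ω} (h : ∀ m, 1 ≤ m → m ≤ n → S m ω ≠ y) : localTime S y n ω = 0 := by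
  rw [localTime, Finset.card_eq_zero, Finset.filter_eq_empty_iff]
  intro m hm
  rw [Finset.mem_Icc] at hm
  exact h m hm.1 hm.2

lemma annPotential_eq_Psi {d : ℕ} {Ω : Type*} {φ : ℝ → ℝ} (hφ0 : φ 0 = 0)
    {S : ℕ → Ω → Fin d → ℤ} {ω : Ω} (hω : ∀ m, natNorm (S m ω) ≤ m) (n : ℕ) :
    annPotential φ S n ω = Psi φ S n ω := by
  rw [annPotential, Psi]
  refine tsum_eq_sum fun y hy => ?_
  have : localTime S y n ω = 0 := by
    refine localTime_eq_zero fun m h1 h2 hSm => ?_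
    exact hy (mem_ballF (hSm ▸ le_trans (hω m) h2))
  rw [this]
  simpa using hφ0

section Meas

variable {d : ℕ} {Ω : Type*} [MeasurableSpace Ω] {S : ℕ → Ω → Fin d → ℤ}

lemma measurable_S_eq (hS : ∀ n, Measurable (S n)) (n : ℕ) (y : Fin d → ℤ) :
    MeasurableSet {ω | S n ω = y} := by
  have : {ω | S n ω = y} = S n ⁻¹' {y} := rfl
  rw [this]
  exact hS n (measurableSet_singleton y)

lemma measurable_localTime (hS : ∀ n, Measurable (S n)) (y : Fin d → ℤ) (n : ℕ) :
    Measurable fun ω => localTime S y n ω := by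
  have : (fun ω => localTime S y n ω)
      = fun ω => ∑ m ∈ Finset.Icc 1 n, if S m ω = y then 1 else 0 := by
    funext ω; exact localTime_card S y n ω
  rw [this]
  exact Finset.measurable_sum _ fun m _ =>
    Measurable.ite (measurable_S_eq hS m y) measurable_const measurable_const

lemma measurable_Psi (hS : ∀ n, Measurable (S n)) (φ : ℝ → ℝ) (n : ℕ) :
    Measurable fun ω => Psi φ S n ω :=
  Finset.measurable_sum _ fun y _ =>
    (measurable_of_countable (fun k : ℕ => φ (k : ℝ))).comp (measurable_localTime hS y n)

lemma measurable_hits (hS : ∀ n, Measurable (S n)) (x : Fin d → ℤ) :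
    MeasurableSet (hits S x) := by
  have : hits S x = ⋃ n, {ω | S n ω = x} := by
    ext ω; simp [hits]
  rw [this]
  exact MeasurableSet.iUnion fun n => measurable_S_eq hS n x

omit [MeasurableSpace Ω] in
lemma hitTime_eq_iff {x : Fin d → ℤ} {ω : Ω} {n : ℕ} :
    hitTime S x ω = n ↔
      (S n ω = x ∧ ∀ m < n, S m ω ≠ x) ∨ (n = 0 ∧ ∀ k, S k ω ≠ x) := by
  constructor
  · intro h
    by_cases hne : ∃ k, S k ω = x
    · left
      have hmem : S (hitTime S x ω) ω = x := Nat.sInf_mem hne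
      refine ⟨h ▸ hmem, fun m hm hmx => ?_⟩
      have : hitTime S x ω ≤ m := Nat.sInf_le hmx
      omega
    · right
      push_neg at hne
      refine ⟨?_, hne⟩
      rw [← h, hitTime]
      have : {n | S n ω = x} = ∅ := Set.eq_empty_iff_forall_notMem.2 hne
      rw [this, Nat.sInf_empty]
  · rintro (⟨h1, h2⟩ | ⟨h1, h2⟩)
    · refine le_antisymm (Nat.sInf_le h1) ?_
      refine le_csInf ⟨n, h1⟩ fun k hk => ?_
      by_contra hlt
      exact h2 k (by omega) hk
    · rw [hitTime, h1]
      have : {n | S n ω = x} = ∅ := Set.eq_empty_iff_forall_notMem.2 h2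
      rw [this, Nat.sInf_empty]

lemma measurable_hitTime (hS : ∀ n, Measurable (S n)) (x : Fin d → ℤ) :
    Measurable (hitTime S x) := by
  refine measurable_to_countable' fun n => ?_
  have : hitTime S x ⁻¹' {n}
      = ({ω | S n ω = x} ∩ ⋂ m ∈ Finset.range n, {ω | S m ω = x}ᶜ)
        ∪ (if n = 0 then (⋂ k, {ω | S k ω = x}ᶜ) else ∅) := by
    ext ω
    simp only [Set.mem_preimage, Set.mem_singleton_iff, hitTime_eq_iff, Set.mem_union,
      Set.mem_inter_iff, Set.mem_iInter, Set.mem_compl_iff, Set.mem_setOf_eq,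
      Finset.mem_range]
    split
    · next h => simp [h]
    · next h => simp [h]
  rw [this]
  refine MeasurableSet.union
    ((measurable_S_eq hS n x).inter
      (MeasurableSet.biInter (Finset.range n).countable_toSet
        fun m _ => (measurable_S_eq hS m x).compl)) ?_
  split
  · exact MeasurableSet.iInter fun k => (measurable_S_eq hS k x).compl
  · exact MeasurableSet.empty

lemma measurable_nat_comp {τ : Ω → ℕ} (hτ : Measurable τ) {F : ℕ → Ω → ℝ}
    (hF : ∀ n, Measurable (F n)) : Measurable fun ω => F (τ ω) ω := by
  intro s hs
  have : (fun ω => F (τ ω) ω) ⁻¹' s = ⋃ n, τ ⁻¹' {n} ∩ F n ⁻¹' s := by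
    ext ω
    simp only [Set.mem_preimage, Set.mem_iUnion, Set.mem_inter_iff, Set.mem_singleton_iff]
    exact ⟨fun h => ⟨τ ω, rfl, h⟩, fun ⟨n, hn, h⟩ => hn ▸ h⟩
  rw [this]
  exact MeasurableSet.iUnion fun n => (hτ (measurableSet_singleton n)).inter (hF n hs)

end Meas

/-- Discrete intermediate value theorem. -/
lemma nat_ivt {a : ℕ → ℕ} (h0 : a 0 = 0) (hstep : ∀ m, a (m + 1) ≤ a m + 1)
    {H k : ℕ} (hk : k ≤ a H) : ∃ m, m ≤ H ∧ a m = k := by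
  induction H with
  | zero => exact ⟨0, le_refl 0, by omega⟩
  | succ H ih =>
    by_cases h : k ≤ a H
    · obtain ⟨m, hm, hma⟩ := ih h
      exact ⟨m, by omega, hma⟩
    · have := hstep H
      exact ⟨H + 1, le_refl _, by omega⟩

/-- Existence of a direct lattice path from the origin to `x`. -/
lemma exists_path {d : ℕ} (N : ℕ) : ∀ x : Fin d → ℤ, natNorm x = N →
    ∃ q : ℕ → Fin d → ℤ, q 0 = 0 ∧ (∀ m ≤ N, natNorm (q m) = m) ∧
      (∀ m < N, q (m + 1) - q m ∈ unitSteps d) ∧ q N = x := by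
  induction N with
  | zero =>
    intro x hx
    refine ⟨fun _ => 0, rfl, fun m hm => ?_, fun m hm => by omega, (natNorm_eq_zero hx).symm⟩
    interval_cases m
    exact natNorm_zero
  | succ N ih =>
    intro x hx
    have : ∃ i, x i ≠ 0 := by
      by_contra h
      push_neg at h
      have : x = 0 := funext h
      rw [this, natNorm_zero] at hx
      omega
    obtain ⟨i, hi⟩ := this
    set s := stepVec i (decide (0 < x i)) with hs
    have hsi : ((x - s) i).natAbs + 1 = (x i).natAbs := by
      have hv : (x - s) i = x i - (if 0 < x i then 1 else -1) := by
        simp [hs, stepVec]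
      rw [hv]
      split <;> omega
    have hsj : ∀ j, j ≠ i → (x - s) j = x j := by
      intro j hj
      simp [hs, stepVec, hj]
    have hnorm : natNorm (x - s) = N := by
      have e1 : natNorm (x - s)
          = ∑ j ∈ Finset.univ.erase i, ((x - s) j).natAbs + ((x - s) i).natAbs :=
        (Finset.sum_erase_add _ _ (Finset.mem_univ i)).symm
      have e2 : natNorm x = ∑ j ∈ Finset.univ.erase i, (x j).natAbs + (x i).natAbs :=
        (Finset.sum_erase_add _ _ (Finset.mem_univ i)).symm
      have e3 : ∑ j ∈ Finset.univ.erase i, ((x - s) j).natAbs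
          = ∑ j ∈ Finset.univ.erase i, (x j).natAbs :=
        Finset.sum_congr rfl fun j hj => by rw [hsj j (Finset.ne_of_mem_erase hj)]
      omega
    obtain ⟨q, hq0, hqn, hqs, hqN⟩ := ih (x - s) hnorm
    refine ⟨fun m => if m ≤ N then q m else x, by simp [hq0], ?_, ?_, by simp⟩
    · intro m hm
      by_cases h : m ≤ N
      · simpa [h] using hqn m h
      · have : m = N + 1 := by omega
        simp [h, this, hx]
    · intro m hm
      by_cases h : m < N
      · simpa [Nat.le_of_lt h, Nat.succ_le_of_lt h] using hqs m h
      · have hmN : m = N := by omega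
        subst hmN
        have : (if m + 1 ≤ m then q (m + 1) else x) - (if m ≤ m then q m else x)
            = x - q m := by simp
        rw [this, hqN, sub_sub_cancel]
        exact stepVec_mem i _

/-- **Bounds on the annealed two-point function** (Flury, (4)–(5)). For every `λ ≥ 0`
and `x ∈ ℤ^d`, `‖x‖₁(λ + φ(1)) ≤ b_λ(x) ≤ ‖x‖₁(λ + log(2d) + φ(1))`. -/
theorem annealed_two_point_bounds
    {d : ℕ} (hd : 0 < d)
    {Ω : Type*} [MeasurableSpace Ω] (P : Measure Ω) [IsProbabilityMeasure P]
    (S : ℕ → Ω → Fin d → ℤ) (hS : IsSRW P S)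
    (φ : ℝ → ℝ) (hφ : IsGoodPhi φ) :
    ∀ lam : ℝ, 0 ≤ lam → ∀ x : Fin d → ℤ,
      norm1Z x * (lam + φ 1) ≤ twoPointB P φ S lam x ∧
        twoPointB P φ S lam x ≤ norm1Z x * (lam + Real.log (2 * (d : ℝ)) + φ 1) := by
  classical
  intro lam hlam x
  obtain ⟨hS0, hSmeas, hSmap, hSind⟩ := hS
  obtain ⟨hφ0, hφpos, hφmono, -, -, -⟩ := hφ
  set N := natNorm x with hNdef
  -- basic facts about φ
  have hφ1 : (0 : ℝ) ≤ φ 1 := hφpos 1 one_pos.le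
  have hφk0 : ∀ k : ℕ, 0 ≤ φ (k : ℝ) := fun k => hφpos _ (Nat.cast_nonneg k)
  have hφk : ∀ k : ℕ, 1 ≤ k → φ 1 ≤ φ (k : ℝ) := fun k hk =>
    hφmono (Set.mem_Ici.2 one_pos.le) (Set.mem_Ici.2 (Nat.cast_nonneg k))
      (by exact_mod_cast hk)
  -- increments
  set incr : ℕ → Ω → Fin d → ℤ := fun n ω => S (n + 1) ω - S n ω with hincr
  have hincr_meas : ∀ n, Measurable (incr n) := fun n =>
    measurable_pi_iff.2 fun i =>
      ((measurable_pi_apply i).comp (hSmeas (n + 1))).sub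
        ((measurable_pi_apply i).comp (hSmeas n))
  have hmap : ∀ n (A : Set (Fin d → ℤ)), MeasurableSet A →
      P (incr n ⁻¹' A) = stepDist d A := fun n A hA => by
    rw [← hSmap n, Measure.map_apply (hincr_meas n) hA]
  have hSsucc : ∀ n ω, S (n + 1) ω = S n ω + incr n ω := by
    intro n ω; rw [hincr]; ring
  -- the good set
  set G : Set Ω := ⋂ n, incr n ⁻¹' ↑(unitSteps d) with hG
  have hGmeas : MeasurableSet G :=
    MeasurableSet.iInter fun n => hincr_meas n (unitSteps d).measurableSet
  have hGc : P Gᶜ = 0 := by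
    rw [hG, Set.compl_iInter]
    refine measure_iUnion_null fun n => ?_
    rw [← Set.preimage_compl, hmap n _ (unitSteps d).measurableSet.compl]
    exact stepDist_compl d
  have hGstep : ∀ ω ∈ G, ∀ m, natNorm (S (m + 1) ω) ≤ natNorm (S m ω) + 1 := by
    intro ω hω m
    have h1 : incr m ω ∈ unitSteps d := Set.mem_iInter.1 hω m
    obtain ⟨i, b, hib⟩ := mem_unitSteps h1
    calc natNorm (S (m + 1) ω) = natNorm (S m ω + incr m ω) := by rw [← hSsucc]
      _ ≤ natNorm (S m ω) + natNorm (incr m ω) := natNorm_add_le _ _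
      _ = natNorm (S m ω) + 1 := by rw [hib, natNorm_stepVec]
  have hGnorm : ∀ ω ∈ G, ∀ m, natNorm (S m ω) ≤ m := by
    intro ω hω m
    induction m with
    | zero => rw [hS0]; simp [natNorm_zero]
    | succ m ihm => have := hGstep ω hω m; omega
  -- the integrand and its measurable version
  set F : Ω → ℝ := fun ω' => Real.exp (-(lam * (hitTime S x ω' : ℝ))
    - annPotential φ S (hitTime S x ω') ω') with hF
  set f : Ω → ℝ := (hits S x).indicator F with hf
  have hTP : twoPointB P φ S lam x = -Real.log (∫ ω, f ω ∂P) := rfl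
  set g : Ω → ℝ := (hits S x ∩ G).indicator (fun ω =>
    Real.exp (-(lam * (hitTime S x ω : ℝ)) - Psi φ S (hitTime S x ω) ω)) with hg
  have hg_meas : Measurable g := by
    refine Measurable.indicator ?_ ((measurable_hits hSmeas x).inter hGmeas)
    exact measurable_nat_comp (F := fun n ω =>
        Real.exp (-(lam * (n : ℝ)) - Psi φ S n ω))
      (measurable_hitTime hSmeas x) fun n =>
      Real.measurable_exp.comp (measurable_const.sub (measurable_Psi hSmeas φ n))
  have hPsi_nonneg : ∀ n ω, 0 ≤ Psi φ S n ω := fun n ω =>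
    Finset.sum_nonneg fun y _ => hφk0 _
  have hfg : ∀ ω ∈ G, f ω = g ω := by
    intro ω hω
    by_cases hh : ω ∈ hits S x
    · rw [hf, hg, Set.indicator_of_mem hh, Set.indicator_of_mem (Set.mem_inter hh hω)]
      show Real.exp (-(lam * (hitTime S x ω : ℝ)) - annPotential φ S (hitTime S x ω) ω)
        = Real.exp (-(lam * (hitTime S x ω : ℝ)) - Psi φ S (hitTime S x ω) ω)
      rw [annPotential_eq_Psi hφ0 (hGnorm ω hω)]
    · rw [hf, hg, Set.indicator_of_notMem hh,
        Set.indicator_of_notMem (fun h => hh h.1)]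
  have haeG : ∀ᵐ ω ∂P, ω ∈ G := by
    rw [ae_iff]
    exact hGc
  have haefg : f =ᵐ[P] g := by
    filter_upwards [haeG] with ω hω using hfg ω hω
  have hg_bound : ∀ ω, ‖g ω‖ ≤ 1 := by
    intro ω
    rw [hg, Set.indicator_apply]
    split
    · rw [Real.norm_eq_abs, abs_of_nonneg (Real.exp_nonneg _), Real.exp_le_one_iff]
      have h1 : 0 ≤ lam * (hitTime S x ω : ℝ) := mul_nonneg hlam (Nat.cast_nonneg _)
      have h2 := hPsi_nonneg (hitTime S x ω) ω
      linarith
    · simp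
  have hg_int : Integrable g P :=
    Integrable.mono' (integrable_const 1) hg_meas.aestronglyMeasurable
      (Filter.Eventually.of_forall hg_bound)
  have hf_int : Integrable f P := hg_int.congr haefg.symm
  have hf_nonneg : ∀ ω, 0 ≤ f ω := fun ω =>
    Set.indicator_nonneg (fun ω' _ => Real.exp_nonneg _) ω
  -- key estimate on the hitting event
  have key : ∀ ω ∈ G, ω ∈ hits S x →
      N ≤ hitTime S x ω ∧ (N : ℝ) * φ 1 ≤ Psi φ S (hitTime S x ω) ω := by
    intro ω hω hh
    have hSx : S (hitTime S x ω) ω = x := Nat.sInf_mem hh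
    have hNT : N ≤ hitTime S x ω := by
      have := hGnorm ω hω (hitTime S x ω)
      rw [hSx] at this
      omega
    refine ⟨hNT, ?_⟩
    have hivt : ∀ k, k ∈ Finset.Icc 1 N → ∃ m, m ≤ hitTime S x ω ∧ natNorm (S m ω) = k := by
      intro k hk
      refine nat_ivt (a := fun m => natNorm (S m ω))
        (by show natNorm (S 0 ω) = 0; rw [hS0]; exact natNorm_zero) (hGstep ω hω) ?_
      show k ≤ natNorm (S (hitTime S x ω) ω)
      rw [hSx, ← hNdef]
      exact (Finset.mem_Icc.1 hk).2
    choose! m hm1 hm2 using hivt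
    set Tset := (Finset.Icc 1 N).image (fun k => S (m k) ω) with hTset
    have hcard : Tset.card = N := by
      rw [hTset, Finset.card_image_of_injOn, Nat.card_Icc]
      · omega
      · intro a ha b hb h
        have h' : S (m a) ω = S (m b) ω := h
        have h1 := hm2 a (Finset.mem_coe.1 ha)
        have h2 := hm2 b (Finset.mem_coe.1 hb)
        rw [h'] at h1
        omega
    have hTsub : Tset ⊆ ballF d (hitTime S x ω) := by
      intro y hy
      obtain ⟨k, hk, rfl⟩ := Finset.mem_image.1 hy
      refine mem_ballF ?_
      rw [hm2 k hk]
      exact le_trans (Finset.mem_Icc.1 hk).2 hNT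
    have hlt : ∀ y ∈ Tset, 1 ≤ localTime S y (hitTime S x ω) ω := by
      intro y hy
      obtain ⟨k, hk, rfl⟩ := Finset.mem_image.1 hy
      have hmk1 : 1 ≤ m k := by
        rcases Nat.eq_zero_or_pos (m k) with h0 | h0
        · exfalso
          have := hm2 k hk
          rw [h0, hS0, natNorm_zero] at this
          have := (Finset.mem_Icc.1 hk).1
          omega
        · exact h0
      refine Finset.card_pos.2 ⟨m k, Finset.mem_filter.2 ⟨Finset.mem_Icc.2 ⟨hmk1, hm1 k hk⟩, rfl⟩⟩
    calc (N : ℝ) * φ 1 = Tset.card * φ 1 := by rw [hcard]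
      _ = ∑ _y ∈ Tset, φ 1 := by rw [Finset.sum_const, nsmul_eq_mul]
      _ ≤ ∑ y ∈ Tset, φ (localTime S y (hitTime S x ω) ω : ℝ) :=
          Finset.sum_le_sum fun y hy => hφk _ (hlt y hy)
      _ ≤ ∑ y ∈ ballF d (hitTime S x ω), φ (localTime S y (hitTime S x ω) ω : ℝ) :=
          Finset.sum_le_sum_of_subset_of_nonneg hTsub fun y _ _ => hφk0 _
      _ = Psi φ S (hitTime S x ω) ω := rfl
  -- upper bound on the integral
  have hub : ∀ ω ∈ G, f ω ≤ Real.exp (-((N : ℝ) * (lam + φ 1))) := by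
    intro ω hω
    by_cases hh : ω ∈ hits S x
    · rw [hfg ω hω, hg, Set.indicator_of_mem (Set.mem_inter hh hω)]
      show Real.exp (-(lam * (hitTime S x ω : ℝ)) - Psi φ S (hitTime S x ω) ω)
        ≤ Real.exp (-((N : ℝ) * (lam + φ 1)))
      rw [Real.exp_le_exp]
      obtain ⟨hNT, hPsi⟩ := key ω hω hh
      have h1 : lam * (N : ℝ) ≤ lam * (hitTime S x ω : ℝ) :=
        mul_le_mul_of_nonneg_left (Nat.cast_le.2 hNT) hlam
      nlinarith
    · rw [hf, Set.indicator_of_notMem hh]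
      exact (Real.exp_pos _).le
  have hIub : ∫ ω, f ω ∂P ≤ Real.exp (-((N : ℝ) * (lam + φ 1))) := by
    have hle : f ≤ᵐ[P] fun _ => Real.exp (-((N : ℝ) * (lam + φ 1))) := by
      filter_upwards [haeG] with ω hω using hub ω hω
    calc ∫ ω, f ω ∂P ≤ ∫ _ω, Real.exp (-((N : ℝ) * (lam + φ 1))) ∂P :=
        integral_mono_of_nonneg (Filter.Eventually.of_forall hf_nonneg)
          (integrable_const _) hle
      _ = Real.exp (-((N : ℝ) * (lam + φ 1))) := by simp
  -- the straight-path event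
  obtain ⟨q, hq0, hqn, hqs, hqN⟩ := exists_path N x rfl
  set A : Set Ω := ⋂ mm ∈ Finset.range N, incr mm ⁻¹' {q (mm + 1) - q mm} with hA
  have hAmeas : MeasurableSet A :=
    (Finset.range N).measurableSet_biInter fun mm _ =>
      hincr_meas mm (measurableSet_singleton _)
  have hPA : P A = ((2 * d : ℕ) : ENNReal)⁻¹ ^ N := by
    rw [hA, hSind.measure_inter_preimage_eq_mul (Finset.range N)
      (sets := fun mm => {q (mm + 1) - q mm}) (fun i _ => measurableSet_singleton _)]
    rw [Finset.prod_congr rfl fun mm hmm => by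
      rw [hmap mm _ (measurableSet_singleton _),
        stepDist_singleton (hqs mm (Finset.mem_range.1 hmm))]]
    rw [Finset.prod_const, Finset.card_range]
  have hA_S : ∀ ω ∈ A, ∀ mm, mm ≤ N → S mm ω = q mm := by
    intro ω hω mm hmm
    induction mm with
    | zero => rw [hS0, hq0]
    | succ mm ih =>
      have h1 : incr mm ω = q (mm + 1) - q mm := Set.mem_iInter₂.1 hω mm
        (Finset.mem_range.2 (by omega))
      rw [hSsucc, ih (by omega), h1]
      abel
  have hA_hit : ∀ ω ∈ A, ω ∈ hits S x := by
    intro ω hω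
    show ∃ n, S n ω = x
    exact ⟨N, by rw [hA_S ω hω N le_rfl, hqN]⟩
  have hA_T : ∀ ω ∈ A, hitTime S x ω = N := by
    intro ω hω
    rw [hitTime_eq_iff]
    left
    refine ⟨by rw [hA_S ω hω N le_rfl, hqN], fun mm hmm hmx => ?_⟩
    rw [hA_S ω hω mm (by omega)] at hmx
    have h1 := hqn mm (by omega)
    rw [hmx, ← hNdef] at h1
    omega
  -- local times and potential on the straight-path event
  set Tq := (Finset.Icc 1 N).image q with hTq
  have hTq_sub : Tq ⊆ ballF d N := by
    intro y hy
    obtain ⟨k, hk, rfl⟩ := Finset.mem_image.1 hy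
    exact mem_ballF (le_of_eq_of_le (hqn k (Finset.mem_Icc.1 hk).2) (Finset.mem_Icc.1 hk).2)
  have hTq_card : Tq.card = N := by
    rw [hTq, Finset.card_image_of_injOn, Nat.card_Icc]
    · omega
    · intro a ha b hb h
      have h1 := hqn a (Finset.mem_Icc.1 (Finset.mem_coe.1 ha)).2
      have h2 := hqn b (Finset.mem_Icc.1 (Finset.mem_coe.1 hb)).2
      rw [show q a = q b from h] at h1
      omega
  have hA_local : ∀ ω ∈ A, ∀ y, localTime S y N ω = if y ∈ Tq then 1 else 0 := by
    intro ω hω y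
    have hfilter : (Finset.Icc 1 N).filter (fun mm => S mm ω = y)
        = (Finset.Icc 1 N).filter (fun mm => q mm = y) := by
      refine Finset.filter_congr fun mm hmm => ?_
      rw [hA_S ω hω mm (Finset.mem_Icc.1 hmm).2]
    rw [localTime, hfilter]
    by_cases hy : y ∈ Tq
    · rw [if_pos hy]
      obtain ⟨k, hk, rfl⟩ := Finset.mem_image.1 hy
      have heq : (Finset.Icc 1 N).filter (fun mm => q mm = q k) = {k} := by
        ext mm
        simp only [Finset.mem_filter, Finset.mem_singleton]
        constructor
        · rintro ⟨hmm, he⟩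
          have h1 := hqn mm (Finset.mem_Icc.1 hmm).2
          have h2 := hqn k (Finset.mem_Icc.1 hk).2
          rw [he] at h1
          omega
        · rintro rfl
          exact ⟨hk, rfl⟩
      rw [heq, Finset.card_singleton]
    · rw [if_neg hy, Finset.card_eq_zero, Finset.filter_eq_empty_iff]
      intro mm hmm h
      exact hy (Finset.mem_image.2 ⟨mm, hmm, h⟩)
  have hA_pot : ∀ ω ∈ A, annPotential φ S N ω = (N : ℝ) * φ 1 := by
    intro ω hω
    have hterm : ∀ y, φ ((localTime S y N ω : ℕ) : ℝ) = if y ∈ Tq then φ 1 else 0 := by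
      intro y
      rw [hA_local ω hω y]
      by_cases hy : y ∈ Tq
      · rw [if_pos hy, if_pos hy, Nat.cast_one]
      · rw [if_neg hy, if_neg hy, Nat.cast_zero, hφ0]
    rw [annPotential]
    calc ∑' y, φ ((localTime S y N ω : ℕ) : ℝ)
        = ∑ y ∈ ballF d N, φ ((localTime S y N ω : ℕ) : ℝ) :=
          tsum_eq_sum fun y hy => by
            rw [hterm y, if_neg (fun h => hy (hTq_sub h))]
      _ = ∑ y ∈ ballF d N, if y ∈ Tq then φ 1 else 0 :=
          Finset.sum_congr rfl fun y _ => hterm y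
      _ = ∑ _y ∈ Tq, φ 1 := by
          rw [← Finset.sum_filter, Finset.filter_mem_eq_inter,
            Finset.inter_eq_right.2 hTq_sub]
      _ = (N : ℝ) * φ 1 := by rw [Finset.sum_const, hTq_card, nsmul_eq_mul]
  -- value of the integrand on the straight-path event
  have hfA : ∀ ω ∈ A, f ω = Real.exp (-(lam * (N : ℝ)) - (N : ℝ) * φ 1) := by
    intro ω hω
    rw [hf, Set.indicator_of_mem (hA_hit ω hω)]
    show Real.exp (-(lam * (hitTime S x ω : ℝ)) - annPotential φ S (hitTime S x ω) ω)
      = Real.exp (-(lam * (N : ℝ)) - (N : ℝ) * φ 1)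
    rw [hA_T ω hω, hA_pot ω hω]
  have hlbpt : ∀ ω, A.indicator (fun _ => Real.exp (-(lam * (N : ℝ)) - (N : ℝ) * φ 1)) ω
      ≤ f ω := by
    intro ω
    by_cases hω : ω ∈ A
    · rw [Set.indicator_of_mem hω, hfA ω hω]
    · rw [Set.indicator_of_notMem hω]
      exact hf_nonneg ω
  have h2dpos : (0 : ℝ) < 2 * (d : ℝ) := by
    have : (0 : ℝ) < (d : ℝ) := by exact_mod_cast hd
    linarith
  have hPAreal : (P A).toReal = (2 * (d : ℝ))⁻¹ ^ N := by
    rw [hPA, ENNReal.toReal_pow, ENNReal.toReal_inv, ENNReal.toReal_natCast]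
    push_cast
    ring
  have hIlb : Real.exp (-((N : ℝ) * (lam + Real.log (2 * (d : ℝ)) + φ 1)))
      ≤ ∫ ω, f ω ∂P := by
    have h1 : ∫ ω, A.indicator (fun _ => Real.exp (-(lam * (N : ℝ)) - (N : ℝ) * φ 1)) ω ∂P
        ≤ ∫ ω, f ω ∂P := by
      refine integral_mono_of_nonneg (Filter.Eventually.of_forall fun ω => ?_) hf_int
        (Filter.Eventually.of_forall hlbpt)
      exact Set.indicator_nonneg (fun _ _ => Real.exp_nonneg _) ω
    rw [integral_indicator_const _ hAmeas, measureReal_def, hPAreal, smul_eq_mul] at h1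
    refine le_trans (le_of_eq ?_) h1
    have hinv : (2 * (d : ℝ))⁻¹ = Real.exp (-Real.log (2 * (d : ℝ))) := by
      rw [Real.exp_neg, Real.exp_log h2dpos]
    rw [hinv, ← Real.exp_nat_mul, ← Real.exp_add]
    congr 1
    ring
  -- conclusion
  have hIpos : 0 < ∫ ω, f ω ∂P := lt_of_lt_of_le (Real.exp_pos _) hIlb
  rw [norm1Z_eq_natNorm, hTP, ← hNdef]
  constructor
  · have hlog : Real.log (∫ ω, f ω ∂P) ≤ -((N : ℝ) * (lam + φ 1)) := by
      have := Real.log_le_log hIpos hIub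
      rwa [Real.log_exp] at this
    linarith
  · have hlog : -((N : ℝ) * (lam + Real.log (2 * (d : ℝ)) + φ 1))
        ≤ Real.log (∫ ω, f ω ∂P) := by
      have := Real.log_le_log (Real.exp_pos _) hIlb
      rwa [Real.log_exp] at this
    linarith

end RWRP
end
end
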